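/- arXiv:1102.0439 — 6 statements merged into one kernel-verified Lean document; each statement's English description precedes it below -/
import Mathlib

section
/- If a bipartite density matrix ρ_AB on C^M ⊗ C^N is separable, then its partial transpose (with respect to the second system) is positive semidefinite. -/
open Matrix BigOperators
open scoped ComplexOrder

noncomputable section

/-- A density matrix: positive semidefinite with trace one. -/
def IsDensity {α : Type*} [Fintype α] (ρ : Matrix α α ℂ) : Prop :=
  ρ.PosSemidef ∧ ρ.trace = 1

/-- Tensor (Kronecker) product of matrices on a product index type. -/
def tens {α β : Type*} (σ : Matrix α α ℂ) (τ : Matrix β β ℂ) :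
    Matrix (α × β) (α × β) ℂ :=
  fun p q => σ p.1 q.1 * τ p.2 q.2

/-- Separability: a finite convex combination of product density matrices. -/
def SeparableState {α β : Type*} [Fintype α] [Fintype β]
    (ρ : Matrix (α × β) (α × β) ℂ) : Prop :=
  ∃ (k : ℕ) (p : Fin k → ℝ) (σ : Fin k → Matrix α α ℂ) (τ : Fin k → Matrix β β ℂ),
    (∀ i, 0 ≤ p i) ∧ ∑ i, p i = 1 ∧ (∀ i, IsDensity (σ i)) ∧ (∀ i, IsDensity (τ i)) ∧
    ρ = ∑ i, (p i : ℂ) • tens (σ i) (τ i)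

/-- Partial transpose with respect to the second system. -/
def ptransB {α β : Type*} (ρ : Matrix (α × β) (α × β) ℂ) :
    Matrix (α × β) (α × β) ℂ :=
  fun p q => ρ (p.1, q.2) (q.1, p.2)

/-- Partial trace over the second system. -/
def ptrB {α β : Type*} [Fintype β] (ρ : Matrix (α × β) (α × β) ℂ) : Matrix α α ℂ :=
  fun i k => ∑ j, ρ (i, j) (k, j)

/-- Partial trace over the first system. -/
def ptrA {α β : Type*} [Fintype α] (ρ : Matrix (α × β) (α × β) ℂ) : Matrix β β ℂ :=
  fun j l => ∑ i, ρ (i, j) (i, l)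

/-- Rank-one projection |ψ⟩⟨ψ| associated with a vector. -/
def projv {α : Type*} (ψ : α → ℂ) : Matrix α α ℂ :=
  fun x y => ψ x * (starRingEnd ℂ) (ψ y)

/-- Unit vector condition. -/
def UnitVec {α : Type*} [Fintype α] (ψ : α → ℂ) : Prop :=
  ∑ x, Complex.normSq (ψ x) = 1

/-- Two-party reduced state ρ_АБ of a tripartite pure state. -/
def rhoAB {α β γ : Type*} [Fintype γ] (ψ : α × β × γ → ℂ) :
    Matrix (α × β) (α × β) ℂ :=
  fun p q => ∑ c, ψ (p.1, p.2, c) * (starRingEnd ℂ) (ψ (q.1, q.2, c))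

def rhoBC {α β γ : Type*} [Fintype α] (ψ : α × β × γ → ℂ) :
    Matrix (β × γ) (β × γ) ℂ :=
  fun p q => ∑ a, ψ (a, p.1, p.2) * (starRingEnd ℂ) (ψ (a, q.1, q.2))

def rhoAC {α β γ : Type*} [Fintype β] (ψ : α × β × γ → ℂ) :
    Matrix (α × γ) (α × γ) ℂ :=
  fun p q => ∑ b, ψ (p.1, b, p.2) * (starRingEnd ℂ) (ψ (q.1, b, q.2))

def rhoA {α β γ : Type*} [Fintype β] [Fintype γ] (ψ : α × β × γ → ℂ) :
    Matrix α α ℂ :=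
  fun x y => ∑ b, ∑ c, ψ (x, b, c) * (starRingEnd ℂ) (ψ (y, b, c))

def rhoB {α β γ : Type*} [Fintype α] [Fintype γ] (ψ : α × β × γ → ℂ) :
    Matrix β β ℂ :=
  fun x y => ∑ a, ∑ c, ψ (a, x, c) * (starRingEnd ℂ) (ψ (a, y, c))

def rhoC {α β γ : Type*} [Fintype α] [Fintype β] (ψ : α × β × γ → ℂ) :
    Matrix γ γ ℂ :=
  fun x y => ∑ a, ∑ b, ψ (a, b, x) * (starRingEnd ℂ) (ψ (a, b, y))

/-- `x` majorizes `y` (for nonnegative vectors, with implicit zero padding):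
the sum of any `|T|` entries of `y` is dominated by some choice of at most
`|T|` entries of `x`, and the total sums agree. -/
def Majorizes {α β : Type*} [Fintype α] [Fintype β] (x : α → ℝ) (y : β → ℝ) : Prop :=
  (∀ T : Finset β, ∃ S : Finset α, S.card ≤ T.card ∧ ∑ i ∈ T, y i ≤ ∑ i ∈ S, x i) ∧
  ∑ i, x i = ∑ i, y i

/-- Von Neumann entropy of a Hermitian matrix, via its eigenvalues. -/
def vN {α : Type*} [Fintype α] [DecidableEq α] {ρ : Matrix α α ℂ}
    (h : ρ.IsHermitian) : ℝ :=
  -∑ i, h.eigenvalues i * Real.log (h.eigenvalues i)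

/-- Tensor rank of a tripartite vector: least number of product vectors summing to it. -/
def tensorRank {α β γ : Type*} [Fintype α] [Fintype β] [Fintype γ]
    (ψ : α × β × γ → ℂ) : ℕ :=
  sInf {r : ℕ | ∃ (a : Fin r → α → ℂ) (b : Fin r → β → ℂ) (c : Fin r → γ → ℂ),
    ∀ x, ψ x = ∑ i, a i x.1 * b i x.2.1 * c i x.2.2}

/-- Orthonormal family of vectors. -/
def OrthonormalFam {α : Type*} [Fintype α] {k : ℕ} (v : Fin k → α → ℂ) : Prop :=
  ∀ i j, ∑ x, (starRingEnd ℂ) (v i x) * v j x = if i = j then 1 else 0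

/-- Maximally correlated state: ρ = Σ_{i,j} c_{ij} |i_B⟩⟨j_B| ⊗ |i_C⟩⟨j_C|
for some orthonormal families. -/
def IsMaxCorrelated {β γ : Type*} [Fintype β] [Fintype γ]
    (ρ : Matrix (β × γ) (β × γ) ℂ) : Prop :=
  ∃ (k : ℕ) (c : Matrix (Fin k) (Fin k) ℂ) (e : Fin k → β → ℂ) (f : Fin k → γ → ℂ),
    OrthonormalFam e ∧ OrthonormalFam f ∧
    ∀ p q, ρ p q = ∑ i, ∑ j,
      c i j * (e i p.1 * (starRingEnd ℂ) (e j q.1)) * (f i p.2 * (starRingEnd ℂ) (f j q.2))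


open scoped Kronecker

lemma tens_eq_kron {α β : Type*} (σ : Matrix α α ℂ) (τ : Matrix β β ℂ) :
    tens σ τ = σ ⊗ₖ τ := by
  ext ⟨a,b⟩ ⟨c,d⟩; rfl

lemma kron_conjTranspose {α β : Type*} (A : Matrix α α ℂ) (B : Matrix β β ℂ) :
    (A ⊗ₖ B)ᴴ = Aᴴ ⊗ₖ Bᴴ := by
  ext ⟨a,b⟩ ⟨c,d⟩
  simp [conjTranspose_apply, kroneckerMap_apply, mul_comm]

lemma tens_posSemidef {α β : Type*} [Fintype α] [Fintype β] [DecidableEq α] [DecidableEq β]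
    {σ : Matrix α α ℂ} {τ : Matrix β β ℂ}
    (hσ : σ.PosSemidef) (hτ : τ.PosSemidef) : (tens σ τ).PosSemidef := by
  rw [tens_eq_kron]
  exact hσ.kronecker hτ

lemma smul_posSemidef {α : Type*} [Fintype α] {c : ℝ} (hc : 0 ≤ c)
    {M : Matrix α α ℂ} (hM : M.PosSemidef) : ((c:ℂ) • M).PosSemidef := by
  rw [posSemidef_iff_dotProduct_mulVec]
  constructor
  · rw [Matrix.IsHermitian, conjTranspose_smul, hM.1]
    congr 1
    simp [Complex.ext_iff]
  · intro x
    rw [smul_mulVec, dotProduct_smul]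
    exact mul_nonneg (by exact_mod_cast hc) (hM.dotProduct_mulVec_nonneg x)

/-- a separable bipartite density matrix has positive semidefinite
partial transpose. -/
theorem separable_implies_ppt {M N : ℕ}
    (ρ : Matrix (Fin M × Fin N) (Fin M × Fin N) ℂ)
    (hρ : IsDensity ρ) (hsep : SeparableState ρ) :
    (ptransB ρ).PosSemidef := by
  obtain ⟨k, p, σ, τ, hp, _, hσ, hτ, hsum⟩ := hsep
  have key : ptransB ρ = ∑ i, (p i : ℂ) • tens (σ i) (τ i)ᵀ := by
    subst hsum
    ext ⟨a, b⟩ ⟨c, d⟩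
    simp [ptransB, tens, Matrix.sum_apply, Matrix.smul_apply, Matrix.transpose_apply]
  rw [key]
  refine Finset.sum_induction _ Matrix.PosSemidef (fun a b ha hb => ha.add hb)
    Matrix.PosSemidef.zero (fun i _ => ?_)
  exact smul_posSemidef (hp i) (tens_posSemidef (hσ i).1 (hτ i).1.transpose)

end
end

section
/- If a bipartite density matrix ρ_AB is separable, then it satisfies the reduction criterion: ρ_A ⊗ I_B - ρ_AB is positive semidefinite and I_A ⊗ ρ_B - ρ_AB is positive semidefinite, where ρ_A = Tr_B ρ_AB and ρ_B = Tr_A ρ_AB are the reduced density matrices. -/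
open Matrix BigOperators
open scoped ComplexOrder

noncomputable section

lemma cs_row {α : Type*} [Fintype α] (a x : α → ℂ) :
    Complex.normSq (∑ j, a j * x j) ≤
      (∑ j, Complex.normSq (a j)) * ∑ j, Complex.normSq (x j) := by
  have h1 : ‖∑ j, a j * x j‖ ≤ ∑ j, ‖a j‖ * ‖x j‖ := by
    calc ‖∑ j, a j * x j‖ ≤ ∑ j, ‖a j * x j‖ :=
          norm_sum_le _ _
      _ = ∑ j, ‖a j‖ * ‖x j‖ := by simp [_root_.map_mul]
  calc Complex.normSq (∑ j, a j * x j)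
      = ‖∑ j, a j * x j‖ ^ 2 := (Complex.sq_norm _).symm
    _ ≤ (∑ j, ‖a j‖ * ‖x j‖) ^ 2 := by
        exact pow_le_pow_left₀ (norm_nonneg _) h1 2
    _ ≤ (∑ j, ‖a j‖ ^ 2) * ∑ j, ‖x j‖ ^ 2 :=
        Finset.sum_mul_sq_le_sq_mul_sq _ _ _
    _ = _ := by simp [Complex.sq_norm]

lemma one_sub_posSemidef {α : Type*} [Fintype α] [DecidableEq α]
    {τ : Matrix α α ℂ} (hτ : IsDensity τ) : ((1 : Matrix α α ℂ) - τ).PosSemidef := by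
  obtain ⟨hpsd, htr⟩ := hτ
  obtain ⟨B, rfl⟩ : ∃ B : Matrix α α ℂ, τ = Bᴴ * B := by
    classical
    open scoped MatrixOrder in exact CStarAlgebra.nonneg_iff_eq_star_mul_self.mp hpsd.nonneg
  have hT : (∑ i, ∑ j, Complex.normSq (B i j)) = 1 := by
    have : (Bᴴ * B).trace = ∑ j, ∑ i, (Complex.normSq (B i j) : ℂ) := by
      simp [Matrix.trace, Matrix.diag, Matrix.mul_apply, Matrix.conjTranspose_apply,
        Complex.normSq_eq_conj_mul_self]
    rw [this, Finset.sum_comm] at htr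
    have := congrArg Complex.re htr
    simpa using this
  refine Matrix.PosSemidef.of_dotProduct_mulVec_nonneg ?_ ?_
  · exact Matrix.isHermitian_one.sub (Matrix.isHermitian_conjTranspose_mul_self B)
  · intro x
    have hq : star x ⬝ᵥ ((1 - Bᴴ * B) *ᵥ x) =
        ((∑ j, Complex.normSq (x j)) - ∑ i, Complex.normSq ((B *ᵥ x) i) : ℝ) := by
      rw [Matrix.sub_mulVec, dotProduct_sub, Matrix.one_mulVec,
        ← Matrix.mulVec_mulVec, Matrix.dotProduct_mulVec (star x),
        Matrix.vecMul_conjTranspose, star_star]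
      push_cast
      simp [dotProduct, Complex.normSq_eq_conj_mul_self]
    rw [hq, Complex.zero_le_real, sub_nonneg]
    calc ∑ i, Complex.normSq ((B *ᵥ x) i)
        ≤ ∑ i, (∑ j, Complex.normSq (B i j)) * ∑ j, Complex.normSq (x j) :=
          Finset.sum_le_sum fun i _ => cs_row (fun j => B i j) x
      _ = (∑ i, ∑ j, Complex.normSq (B i j)) * ∑ j, Complex.normSq (x j) := by
          rw [Finset.sum_mul]
      _ = ∑ j, Complex.normSq (x j) := by rw [hT, one_mul]

lemma tens_posSemidef_s1 {α β : Type*} [Fintype α] [Fintype β]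
    {A : Matrix α α ℂ} {B : Matrix β β ℂ} (hA : A.PosSemidef) (hB : B.PosSemidef) :
    (tens A B).PosSemidef := by
  obtain ⟨C, rfl⟩ : ∃ C : Matrix α α ℂ, A = Cᴴ * C := by
    classical
    open scoped MatrixOrder in exact CStarAlgebra.nonneg_iff_eq_star_mul_self.mp hA.nonneg
  obtain ⟨D, rfl⟩ : ∃ D : Matrix β β ℂ, B = Dᴴ * D := by
    classical
    open scoped MatrixOrder in exact CStarAlgebra.nonneg_iff_eq_star_mul_self.mp hB.nonneg
  have : tens (Cᴴ * C) (Dᴴ * D) = (tens C D)ᴴ * (tens C D) := by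
    ext p q
    simp [tens, Matrix.mul_apply, Matrix.conjTranspose_apply, Fintype.sum_prod_type,
      Finset.mul_sum, Finset.sum_mul]
    rw [Finset.sum_comm]
    congr 1; ext i; congr 1; ext j; ring
  rw [this]
  exact Matrix.posSemidef_conjTranspose_mul_self _

lemma posSemidef_add' {n : Type*} [Fintype n] {A B : Matrix n n ℂ}
    (hA : A.PosSemidef) (hB : B.PosSemidef) : (A + B).PosSemidef := by
  refine Matrix.PosSemidef.of_dotProduct_mulVec_nonneg (hA.1.add hB.1) fun x => ?_
  rw [Matrix.add_mulVec, dotProduct_add]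
  exact add_nonneg (hA.dotProduct_mulVec_nonneg x) (hB.dotProduct_mulVec_nonneg x)

lemma posSemidef_real_smul {n : Type*} [Fintype n] {A : Matrix n n ℂ} {c : ℝ}
    (hc : 0 ≤ c) (hA : A.PosSemidef) : ((c : ℂ) • A).PosSemidef := by
  refine Matrix.PosSemidef.of_dotProduct_mulVec_nonneg ?_ ?_
  · show Matrix.IsHermitian _
    unfold Matrix.IsHermitian
    rw [Matrix.conjTranspose_smul, hA.1]
    simp [Complex.conj_ofReal]
  · intro x
    rw [Matrix.smul_mulVec, dotProduct_smul, smul_eq_mul]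
    exact mul_nonneg (by rw [← Complex.ofReal_zero, Complex.real_le_real]; exact hc) (hA.dotProduct_mulVec_nonneg x)

lemma posSemidef_weighted_sum {n : Type*} [Fintype n] {k : ℕ} (p : Fin k → ℝ)
    (hp : ∀ i, 0 ≤ p i) (f : Fin k → Matrix n n ℂ) (hf : ∀ i, (f i).PosSemidef) :
    (∑ i, (p i : ℂ) • f i).PosSemidef :=
  Finset.sum_induction _ Matrix.PosSemidef
    (fun a b ha hb => posSemidef_add' ha hb) Matrix.PosSemidef.zero
    (fun i _ => posSemidef_real_smul (hp i) (hf i))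

/-- a separable bipartite density matrix satisfies the reduction
criterion: ρ_A ⊗ I_B − ρ_AB ≥ 0 and I_A ⊗ ρ_B − ρ_AB ≥ 0. -/
theorem separable_implies_reduction {M N : ℕ}
    (ρ : Matrix (Fin M × Fin N) (Fin M × Fin N) ℂ)
    (hρ : IsDensity ρ) (hsep : SeparableState ρ) :
    (tens (ptrB ρ) (1 : Matrix (Fin N) (Fin N) ℂ) - ρ).PosSemidef ∧
    (tens (1 : Matrix (Fin M) (Fin M) ℂ) (ptrA ρ) - ρ).PosSemidef := by
  obtain ⟨k, p, σ, τ, hp, hpsum, hσ, hτ, rfl⟩ := hsep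
  have htrσ : ∀ i, (∑ a, σ i a a) = (1 : ℂ) := fun i => by
    simpa [Matrix.trace, Matrix.diag] using (hσ i).2
  have htrτ : ∀ i, (∑ b, τ i b b) = (1 : ℂ) := fun i => by
    simpa [Matrix.trace, Matrix.diag] using (hτ i).2
  set ρ : Matrix (Fin M × Fin N) (Fin M × Fin N) ℂ := ∑ i, (p i : ℂ) • tens (σ i) (τ i)
    with hρdef
  have hAeq : tens (ptrB ρ) (1 : Matrix (Fin N) (Fin N) ℂ) - ρ
      = ∑ i, (p i : ℂ) • tens (σ i) ((1 : Matrix (Fin N) (Fin N) ℂ) - τ i) := by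
    ext u v
    simp only [hρdef, tens, ptrB, Matrix.sub_apply, Matrix.sum_apply, Matrix.smul_apply,
      smul_eq_mul]
    rw [Finset.sum_comm (f := fun j i => (p i : ℂ) * (σ i u.1 v.1 * τ i j j)),
      Finset.sum_mul, ← Finset.sum_sub_distrib]
    refine Finset.sum_congr rfl fun i _ => ?_
    rw [show (∑ j, (p i : ℂ) * (σ i u.1 v.1 * τ i j j))
        = (p i : ℂ) * σ i u.1 v.1 * ∑ j, τ i j j from by
      rw [Finset.mul_sum]; exact Finset.sum_congr rfl fun j _ => by ring]
    rw [htrτ i]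
    ring
  have hBeq : tens (1 : Matrix (Fin M) (Fin M) ℂ) (ptrA ρ) - ρ
      = ∑ i, (p i : ℂ) • tens ((1 : Matrix (Fin M) (Fin M) ℂ) - σ i) (τ i) := by
    ext u v
    simp only [hρdef, tens, ptrA, Matrix.sub_apply, Matrix.sum_apply, Matrix.smul_apply,
      smul_eq_mul]
    rw [Finset.sum_comm (f := fun a i => (p i : ℂ) * (σ i a a * τ i u.2 v.2)),
      Finset.mul_sum, ← Finset.sum_sub_distrib]
    refine Finset.sum_congr rfl fun i _ => ?_
    rw [show (∑ a, (p i : ℂ) * (σ i a a * τ i u.2 v.2))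
        = (p i : ℂ) * τ i u.2 v.2 * ∑ a, σ i a a from by
      rw [Finset.mul_sum]; exact Finset.sum_congr rfl fun a _ => by ring]
    rw [htrσ i]
    ring
  constructor
  · rw [hAeq]
    exact posSemidef_weighted_sum p hp _ fun i =>
      tens_posSemidef_s1 (hσ i).1 (one_sub_posSemidef (hτ i))
  · rw [hBeq]
    exact posSemidef_weighted_sum p hp _ fun i =>
      tens_posSemidef_s1 (one_sub_posSemidef (hσ i)) (hτ i).1


end
end

section
/- If a bipartite density matrix ρ_AB has positive semidefinite partial transpose (PPT), then it satisfies the reduction criterion: ρ_A ⊗ I_B ≥ ρ_AB and I_A ⊗ ρ_B ≥ ρ_AB in the Loewner order. -/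
open Matrix BigOperators
open scoped ComplexOrder

noncomputable section

lemma sum4_comm {γ₁ γ₂ γ₃ γ₄ : Type*} {R : Type*} [AddCommMonoid R]
    [Fintype γ₁] [Fintype γ₂] [Fintype γ₃] [Fintype γ₄]
    (f : γ₁ → γ₂ → γ₃ → γ₄ → R) :
    ∑ a, ∑ b, ∑ i, ∑ k, f a b i k = ∑ i, ∑ b, ∑ k, ∑ a, f a b i k := by
  trans ∑ b, ∑ i, ∑ k, ∑ a, f a b i k
  · rw [Finset.sum_comm]
    refine Finset.sum_congr rfl fun b _ => ?_
    rw [Finset.sum_comm]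
    exact Finset.sum_congr rfl fun i _ => Finset.sum_comm
  · exact Finset.sum_comm

lemma sum4_swap {γ₁ γ₂ γ₃ γ₄ : Type*} {R : Type*} [AddCommMonoid R]
    [Fintype γ₁] [Fintype γ₂] [Fintype γ₃] [Fintype γ₄]
    (f : γ₁ → γ₂ → γ₃ → γ₄ → R) :
    ∑ a, ∑ b, ∑ i, ∑ k, f a b i k = ∑ b, ∑ a, ∑ k, ∑ i, f a b i k := by
  rw [Finset.sum_comm]
  exact Finset.sum_congr rfl fun b _ => Finset.sum_congr rfl fun a _ => Finset.sum_comm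

lemma quadQ {α β : Type*} [Fintype α] [Fintype β] [DecidableEq β]
    (σ : Matrix (α × β) (α × β) ℂ) (v : α × β → ℂ) (a b : β) :
    star (fun p : α × β => (if p.2 = a then v (p.1, b) else 0)
        - (if p.2 = b then v (p.1, a) else 0)) ⬝ᵥ
      (σ *ᵥ (fun p : α × β => (if p.2 = a then v (p.1, b) else 0)
        - (if p.2 = b then v (p.1, a) else 0)))
    = ∑ i, ∑ k,
        ((starRingEnd ℂ) (v (i, b)) * σ (i,a) (k,a) * v (k, b)
        - (starRingEnd ℂ) (v (i, b)) * σ (i,a) (k,b) * v (k, a)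
        - (starRingEnd ℂ) (v (i, a)) * σ (i,b) (k,a) * v (k, b)
        + (starRingEnd ℂ) (v (i, a)) * σ (i,b) (k,b) * v (k, a)) := by
  simp only [dotProduct, mulVec, Pi.star_apply, star_sub, apply_ite (starRingEnd ℂ),
    star_zero, Fintype.sum_prod_type, mul_sub, sub_mul, mul_ite, ite_mul, mul_zero, zero_mul,
    Finset.sum_sub_distrib, Finset.sum_ite_eq', Finset.mem_univ, if_true,
    Finset.mul_sum, Finset.sum_ite_eq, Finset.sum_add_distrib]
  ring_nf
  simp only [apply_ite (star : ℂ → ℂ), star_zero, ite_mul, zero_mul,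
    Finset.sum_ite_eq', Finset.mem_univ, if_true, Complex.star_def,
    Finset.sum_ite_irrel, Finset.sum_const_zero]
  ring

lemma keyPSD {α β : Type*} [Fintype α] [Fintype β] [DecidableEq β]
    (σ : Matrix (α × β) (α × β) ℂ) (hσ : σ.PosSemidef) (v : α × β → ℂ) :
    0 ≤ (∑ i, ∑ b, ∑ k, ∑ a, (starRingEnd ℂ) (v (i, b)) * σ (i,a) (k,a) * v (k, b))
      - ∑ i, ∑ b, ∑ k, ∑ a, (starRingEnd ℂ) (v (i, b)) * σ (i,a) (k,b) * v (k, a) := by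
  have h2 : (0:ℂ) ≤ ∑ a : β, ∑ b : β,
      (star (fun p : α × β => (if p.2 = a then v (p.1, b) else 0)
        - (if p.2 = b then v (p.1, a) else 0)) ⬝ᵥ
      (σ *ᵥ (fun p : α × β => (if p.2 = a then v (p.1, b) else 0)
        - (if p.2 = b then v (p.1, a) else 0)))) :=
    Finset.sum_nonneg fun a _ => Finset.sum_nonneg fun b _ => hσ.dotProduct_mulVec_nonneg _
  have h3 : ∑ a : β, ∑ b : β,
      (star (fun p : α × β => (if p.2 = a then v (p.1, b) else 0)
        - (if p.2 = b then v (p.1, a) else 0)) ⬝ᵥ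
      (σ *ᵥ (fun p : α × β => (if p.2 = a then v (p.1, b) else 0)
        - (if p.2 = b then v (p.1, a) else 0))))
      = 2 * ((∑ i, ∑ b, ∑ k, ∑ a, (starRingEnd ℂ) (v (i, b)) * σ (i,a) (k,a) * v (k, b))
      - ∑ i, ∑ b, ∑ k, ∑ a, (starRingEnd ℂ) (v (i, b)) * σ (i,a) (k,b) * v (k, a)) := by
    simp only [quadQ σ v]
    simp only [Finset.sum_sub_distrib, Finset.sum_add_distrib]
    have e4 : ∑ a : β, ∑ b : β, ∑ i : α, ∑ k : α,
        (starRingEnd ℂ) (v (i, a)) * σ (i,b) (k,b) * v (k, a)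
        = ∑ a : β, ∑ b : β, ∑ i : α, ∑ k : α,
        (starRingEnd ℂ) (v (i, b)) * σ (i,a) (k,a) * v (k, b) := Finset.sum_comm
    have e3 : ∑ a : β, ∑ b : β, ∑ i : α, ∑ k : α,
        (starRingEnd ℂ) (v (i, a)) * σ (i,b) (k,a) * v (k, b)
        = ∑ a : β, ∑ b : β, ∑ i : α, ∑ k : α,
        (starRingEnd ℂ) (v (i, b)) * σ (i,a) (k,b) * v (k, a) := Finset.sum_comm
    rw [e4, e3, sum4_comm (fun a b i k => (starRingEnd ℂ) (v (i, b)) * σ (i,a) (k,a) * v (k, b)),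
      sum4_comm (fun a b i k => (starRingEnd ℂ) (v (i, b)) * σ (i,a) (k,b) * v (k, a))]
    ring
  rw [h3] at h2
  have h4 := mul_nonneg (show (0:ℂ) ≤ 2⁻¹ by
    rw [show ((2:ℂ))⁻¹ = ((2⁻¹:ℝ):ℂ) by push_cast; ring]
    exact_mod_cast (by norm_num : (0:ℝ) ≤ 2⁻¹)) h2
  calc (0:ℂ) ≤ 2⁻¹ * (2 * _) := h4
  _ = _ := by ring

/-- a PPT bipartite density matrix satisfies the reduction
criterion: ρ_A ⊗ I_B ≥ ρ_AB and I_A ⊗ ρ_B ≥ ρ_AB in the Loewner order. -/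
theorem ppt_implies_reduction {M N : ℕ}
    (ρ : Matrix (Fin M × Fin N) (Fin M × Fin N) ℂ)
    (hρ : IsDensity ρ) (hppt : (ptransB ρ).PosSemidef) :
    (tens (ptrB ρ) (1 : Matrix (Fin N) (Fin N) ℂ) - ρ).PosSemidef ∧
    (tens (1 : Matrix (Fin M) (Fin M) ℂ) (ptrA ρ) - ρ).PosSemidef := by
  obtain ⟨hherm, -⟩ := hρ
  have hH : ρ.IsHermitian := hherm.1
  -- Hermitian-ness of the reduced matrices
  have hptrB : (ptrB ρ).IsHermitian := by
    ext i k
    simp only [conjTranspose_apply, ptrB, star_sum]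
    exact Finset.sum_congr rfl fun j _ => hH.apply _ _
  have hptrA : (ptrA ρ).IsHermitian := by
    ext j l
    simp only [conjTranspose_apply, ptrA, star_sum]
    exact Finset.sum_congr rfl fun i _ => hH.apply _ _
  have htens1 : (tens (ptrB ρ) (1 : Matrix (Fin N) (Fin N) ℂ)).IsHermitian := by
    ext p q
    simp only [conjTranspose_apply, tens, star_mul', one_apply, apply_ite (star : ℂ → ℂ),
      star_one, star_zero]
    rw [hptrB.apply]
    by_cases h : p.2 = q.2
    · simp [h]
    · simp [h, Ne.symm h]
  have htens2 : (tens (1 : Matrix (Fin M) (Fin M) ℂ) (ptrA ρ)).IsHermitian := by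
    ext p q
    simp only [conjTranspose_apply, tens, star_mul', one_apply, apply_ite (star : ℂ → ℂ),
      star_one, star_zero]
    rw [hptrA.apply]
    by_cases h : p.1 = q.1
    · simp [h]
    · simp [h, Ne.symm h]
  constructor
  · refine PosSemidef.of_dotProduct_mulVec_nonneg (htens1.sub hH) fun x => ?_
    have hk := keyPSD (ptransB ρ) hppt x
    have hA : star x ⬝ᵥ (tens (ptrB ρ) (1 : Matrix (Fin N) (Fin N) ℂ) *ᵥ x)
        = ∑ i, ∑ b, ∑ k, ∑ a,
          (starRingEnd ℂ) (x (i, b)) * (ptransB ρ) (i,a) (k,a) * x (k, b) := by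
      simp only [dotProduct, mulVec, Fintype.sum_prod_type, tens, one_apply, mul_ite,
        mul_one, mul_zero, ite_mul, zero_mul, Finset.sum_ite_irrel, Finset.sum_const_zero,
        Finset.sum_ite_eq', Finset.mem_univ, if_true, Pi.star_apply, Complex.star_def,
        ptransB, ptrB, Finset.mul_sum, Finset.sum_mul, Finset.sum_ite_eq]
      refine Finset.sum_congr rfl fun i _ => Finset.sum_congr rfl fun b _ =>
        Finset.sum_congr rfl fun k _ => Finset.sum_congr rfl fun a _ => by ring
    have hB : star x ⬝ᵥ (ρ *ᵥ x)
        = ∑ i, ∑ b, ∑ k, ∑ a,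
          (starRingEnd ℂ) (x (i, b)) * (ptransB ρ) (i,a) (k,b) * x (k, a) := by
      simp only [dotProduct, mulVec, Fintype.sum_prod_type, Pi.star_apply, Complex.star_def,
        ptransB, Finset.mul_sum]
      refine Finset.sum_congr rfl fun i _ => Finset.sum_congr rfl fun b _ =>
        Finset.sum_congr rfl fun k _ => Finset.sum_congr rfl fun a _ => by ring
    rw [sub_mulVec, dotProduct_sub, hA, hB]
    exact hk
  · refine PosSemidef.of_dotProduct_mulVec_nonneg (htens2.sub hH) fun x => ?_
    have hσ₂ : (((ptransB ρ)ᵀ).submatrix (Prod.swap : Fin N × Fin M → Fin M × Fin N)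
        Prod.swap).PosSemidef := (hppt.transpose).submatrix _
    have hk := keyPSD _ hσ₂ (fun p : Fin N × Fin M => x (p.2, p.1))
    have hA : star x ⬝ᵥ (tens (1 : Matrix (Fin M) (Fin M) ℂ) (ptrA ρ) *ᵥ x)
        = ∑ i, ∑ b, ∑ k, ∑ a, (starRingEnd ℂ) (x (b, i)) *
          (((ptransB ρ)ᵀ).submatrix (Prod.swap : Fin N × Fin M → Fin M × Fin N) Prod.swap)
            (i,a) (k,a) * x (b, k) := by
      simp only [dotProduct, mulVec, Fintype.sum_prod_type, tens, one_apply, mul_ite,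
        mul_one, mul_zero, ite_mul, zero_mul, one_mul, Finset.sum_ite_irrel,
        Finset.sum_const_zero, Finset.sum_ite_eq', Finset.mem_univ, if_true, Pi.star_apply,
        Complex.star_def, submatrix_apply, transpose_apply, Prod.swap_prod_mk,
        ptransB, ptrA, Finset.mul_sum, Finset.sum_mul, Finset.sum_ite_eq]
      rw [Finset.sum_comm]
      refine Finset.sum_congr rfl fun i _ => Finset.sum_congr rfl fun b _ =>
        Finset.sum_congr rfl fun k _ => Finset.sum_congr rfl fun a _ => by ring
    have hB : star x ⬝ᵥ (ρ *ᵥ x)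
        = ∑ i, ∑ b, ∑ k, ∑ a, (starRingEnd ℂ) (x (b, i)) *
          (((ptransB ρ)ᵀ).submatrix (Prod.swap : Fin N × Fin M → Fin M × Fin N) Prod.swap)
            (i,a) (k,b) * x (a, k) := by
      simp only [dotProduct, mulVec, Fintype.sum_prod_type, Pi.star_apply, Complex.star_def,
        submatrix_apply, transpose_apply, Prod.swap_prod_mk, ptransB, Finset.mul_sum]
      rw [sum4_swap (fun i b k a => (starRingEnd ℂ) (x (i, b)) * (ρ (i, b) (k, a) * x (k, a)))]
      refine Finset.sum_congr rfl fun i _ => Finset.sum_congr rfl fun b _ =>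
        Finset.sum_congr rfl fun k _ => Finset.sum_congr rfl fun a _ => by ring
    rw [sub_mulVec, dotProduct_sub, hA, hB]
    exact hk


end
end

section
/- If a bipartite density matrix ρ_AB satisfies the reduction criterion ρ_A ⊗ I_B ≥ ρ_AB, then the eigenvalue vector of ρ_A majorizes the eigenvalue vector of ρ_AB (both listed in decreasing order, padded with zeros to equal length). -/
open Matrix BigOperators
open scoped ComplexOrder

noncomputable section

namespace RedMaj

variable {M N : ℕ}

/-- embed vector at fixed B-coordinate -/
def emb (q : Fin M → ℂ) (b : Fin N) : Fin M × Fin N → ℂ :=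
  fun p => if p.2 = b then q p.1 else 0

lemma tens_one_one : tens (1 : Matrix (Fin M) (Fin M) ℂ) (1 : Matrix (Fin N) (Fin N) ℂ) = 1 := by
  ext ⟨a,b⟩ ⟨c,d⟩
  simp [tens, Matrix.one_apply, Prod.ext_iff, ite_and]
  split_ifs <;> simp_all

lemma tens_mul_tens_one (X Y : Matrix (Fin M) (Fin M) ℂ) :
    tens X (1 : Matrix (Fin N) (Fin N) ℂ) * tens Y 1 = tens (X * Y) 1 := by
  ext ⟨a,b⟩ ⟨c,d⟩
  rw [Matrix.mul_apply, Fintype.sum_prod_type]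
  simp only [tens, Matrix.one_apply, Matrix.mul_apply]
  simp only [mul_ite, ite_mul, mul_one, mul_zero, zero_mul, one_mul]
  simp only [Finset.sum_ite_eq', Finset.mem_univ, if_pos]
  split_ifs with h <;> simp

lemma tens_conjT_one (X : Matrix (Fin M) (Fin M) ℂ) :
    (tens X (1 : Matrix (Fin N) (Fin N) ℂ))ᴴ = tens Xᴴ 1 := by
  ext ⟨a,b⟩ ⟨c,d⟩
  simp [tens, Matrix.conjTranspose_apply, Matrix.one_apply, eq_comm]
  split_ifs <;> simp

lemma tens_diagonal_one (d : Fin M → ℂ) :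
    tens (Matrix.diagonal d) (1 : Matrix (Fin N) (Fin N) ℂ)
      = Matrix.diagonal (fun p : Fin M × Fin N => d p.1) := by
  ext ⟨a,b⟩ ⟨c,e⟩
  simp [tens, Matrix.diagonal_apply, Matrix.one_apply, Prod.ext_iff]
  split_ifs <;> simp_all

lemma mulVec_tens_emb (X : Matrix (Fin M) (Fin M) ℂ) (q : Fin M → ℂ) (b : Fin N) :
    (tens X (1 : Matrix (Fin N) (Fin N) ℂ)) *ᵥ emb q b = emb (X *ᵥ q) b := by
  funext ⟨a, b'⟩
  simp only [Matrix.mulVec, dotProduct, Fintype.sum_prod_type, tens, emb,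
    Matrix.one_apply]
  by_cases hb : b' = b
  · subst hb
    simp only [if_pos rfl]
    congr 1; funext c
    rw [Finset.sum_eq_single b' (by intro x _ hx; simp [hx, Ne.symm hx]) (by simp)]
    simp
  · simp only [if_neg hb]
    apply Finset.sum_eq_zero
    intro c _
    apply Finset.sum_eq_zero
    intro f _
    by_cases hf : f = b <;> by_cases hbf : b' = f <;> simp_all

lemma ptrB_qf (ρ : Matrix (Fin M × Fin N) (Fin M × Fin N) ℂ) (q : Fin M → ℂ) :
    ∑ b, star (emb q b) ⬝ᵥ ρ *ᵥ (emb q b) = star q ⬝ᵥ (ptrB ρ) *ᵥ q := by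
  simp only [dotProduct, Matrix.mulVec, Fintype.sum_prod_type, emb, ptrB,
    Pi.star_apply, RCLike.star_def]
  simp only [apply_ite (starRingEnd ℂ), map_zero, ite_mul, zero_mul, mul_ite, mul_zero]
  simp only [Finset.sum_ite_eq', Finset.mem_univ, if_pos]
  rw [Finset.sum_comm]
  refine Finset.sum_congr rfl fun x1 _ => ?_
  rw [← Finset.mul_sum]
  congr 1
  simp only [Finset.sum_mul]
  rw [Finset.sum_comm]

lemma dot_shift {κ : Type*} [Fintype κ] (X : Matrix κ κ ℂ) (u v : κ → ℂ) :
    star (Xᴴ *ᵥ u) ⬝ᵥ v = star u ⬝ᵥ (X *ᵥ v) := by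
  rw [Matrix.star_mulVec, Matrix.conjTranspose_conjTranspose, Matrix.dotProduct_mulVec]

lemma dot_shift' {κ : Type*} [Fintype κ] {X : Matrix κ κ ℂ} (hX : X.IsHermitian)
    (u v : κ → ℂ) : star (X *ᵥ u) ⬝ᵥ v = star u ⬝ᵥ (X *ᵥ v) := by
  conv_lhs => rw [← hX]
  exact dot_shift X u v


lemma dot_self_eq {κ : Type*} [Fintype κ] (g : κ → ℂ) :
    star g ⬝ᵥ g = ((∑ i, Complex.normSq (g i) : ℝ) : ℂ) := by
  simp only [dotProduct, Pi.star_apply, RCLike.star_def, Complex.ofReal_sum]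
  exact Finset.sum_congr rfl fun i _ => (Complex.normSq_eq_conj_mul_self).symm

lemma sum_dotProduct' {κ ι : Type*} [Fintype κ] (s : Finset ι) (f : ι → κ → ℂ) (g : κ → ℂ) :
    (∑ i ∈ s, f i) ⬝ᵥ g = ∑ i ∈ s, f i ⬝ᵥ g := by
  simp only [dotProduct, Finset.sum_apply, Finset.sum_mul]
  rw [Finset.sum_comm]

lemma dotProduct_sum' {κ ι : Type*} [Fintype κ] (s : Finset ι) (g : κ → ℂ) (f : ι → κ → ℂ) :
    g ⬝ᵥ (∑ i ∈ s, f i) = ∑ i ∈ s, g ⬝ᵥ f i := by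
  simp only [dotProduct, Finset.sum_apply, Finset.mul_sum]
  rw [Finset.sum_comm]

lemma star_mul_self_c (z : ℂ) : star z * z = ((Complex.normSq z : ℝ) : ℂ) := by
  rw [RCLike.star_def, ← Complex.normSq_eq_conj_mul_self]

lemma bessel {κ ι : Type*} [Fintype κ] [DecidableEq ι] (s : Finset ι) (w : ι → κ → ℂ)
    (hw : ∀ i ∈ s, ∀ j ∈ s, star (w i) ⬝ᵥ w j = if i = j then 1 else 0) (g : κ → ℂ) :
    ∑ i ∈ s, Complex.normSq (star g ⬝ᵥ w i) ≤ (star g ⬝ᵥ g).re := by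
  set c : ι → ℂ := fun i => star (w i) ⬝ᵥ g with hc
  have hconj : ∀ i, star g ⬝ᵥ w i = star (c i) := by
    intro i
    rw [hc]
    rw [Matrix.star_dotProduct]
  have key : star (g - ∑ i ∈ s, c i • w i) ⬝ᵥ (g - ∑ i ∈ s, c i • w i)
      = star g ⬝ᵥ g - ((∑ i ∈ s, Complex.normSq (c i) : ℝ) : ℂ) := by
    have hstar : star (g - ∑ i ∈ s, c i • w i)
        = star g - ∑ i ∈ s, star (c i) • star (w i) := by
      rw [star_sub, star_sum]
      congr 1
      exact Finset.sum_congr rfl fun i _ => star_smul _ _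
    rw [hstar]
    rw [sub_dotProduct, dotProduct_sub, dotProduct_sub]
    rw [sum_dotProduct', dotProduct_sum']
    have t2 : ∑ i ∈ s, star g ⬝ᵥ (c i • w i) = ((∑ i ∈ s, Complex.normSq (c i) : ℝ) : ℂ) := by
      push_cast
      refine Finset.sum_congr rfl fun i _ => ?_
      rw [dotProduct_smul, hconj i]
      rw [smul_eq_mul, mul_comm]
      exact star_mul_self_c _
    have t3 : ∑ i ∈ s, (star (c i) • star (w i)) ⬝ᵥ g = ((∑ i ∈ s, Complex.normSq (c i) : ℝ) : ℂ) := by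
      push_cast
      refine Finset.sum_congr rfl fun i _ => ?_
      rw [smul_dotProduct]
      show star (c i) • c i = ((Complex.normSq (c i) : ℝ) : ℂ)
      rw [smul_eq_mul]
      exact star_mul_self_c _
    have t4 : ∑ i ∈ s, (star (c i) • star (w i)) ⬝ᵥ (∑ j ∈ s, c j • w j)
        = ((∑ i ∈ s, Complex.normSq (c i) : ℝ) : ℂ) := by
      push_cast
      refine Finset.sum_congr rfl fun i hi => ?_
      rw [smul_dotProduct, dotProduct_sum']
      have hterm : ∀ j ∈ s, star (w i) ⬝ᵥ (c j • w j) = if i = j then c j else 0 := by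
        intro j hj
        rw [dotProduct_smul, hw i hi j hj]
        simp only [smul_eq_mul, mul_ite, mul_one, mul_zero]
      rw [Finset.sum_congr rfl hterm, Finset.sum_ite_eq s i (fun j => c j), if_pos hi]
      rw [smul_eq_mul]
      exact star_mul_self_c _
    rw [t2, t3, sum_dotProduct', t4]
    ring
  have h0 : (0:ℝ) ≤ (star (g - ∑ i ∈ s, c i • w i) ⬝ᵥ (g - ∑ i ∈ s, c i • w i)).re := by
    rw [dot_self_eq]
    rw [Complex.ofReal_re]
    exact Finset.sum_nonneg fun i _ => Complex.normSq_nonneg _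
  rw [key] at h0
  simp only [Complex.sub_re, Complex.ofReal_re] at h0
  have hns : ∑ i ∈ s, Complex.normSq (star g ⬝ᵥ w i) = ∑ i ∈ s, Complex.normSq (c i) := by
    refine Finset.sum_congr rfl fun i _ => ?_
    rw [hconj i, RCLike.star_def, Complex.normSq_conj]
  linarith

lemma exists_sep_set {M : ℕ} (μ : Fin M → ℝ) (k : ℕ) (hk : k ≤ M) :
    ∃ S : Finset (Fin M), S.card = k ∧ ∀ a ∈ S, ∀ b, b ∉ S → μ b ≤ μ a := by
  induction k with
  | zero => exact ⟨∅, rfl, by simp⟩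
  | succ k ih =>
    obtain ⟨S, hcard, hsep⟩ := ih (Nat.le_of_succ_le hk)
    have hne : (Sᶜ : Finset (Fin M)).Nonempty := by
      rw [← Finset.card_pos, Finset.card_compl, hcard]
      simp only [Fintype.card_fin]
      omega
    obtain ⟨b, hbmem, hbmax⟩ := Finset.exists_max_image (Sᶜ) μ hne
    have hbS : b ∉ S := Finset.mem_compl.mp hbmem
    refine ⟨insert b S, ?_, ?_⟩
    · rw [Finset.card_insert_of_notMem hbS, hcard]
    · intro a ha c hc
      have hcS : c ∉ S := fun h => hc (Finset.mem_insert_of_mem h)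
      rcases Finset.mem_insert.mp ha with rfl | haS
      · exact hbmax c (Finset.mem_compl.mpr hcS)
      · exact hsep a haS c hcS

lemma kyfan_comb {M : ℕ} (μ : Fin M → ℝ) (hμ : ∀ a, 0 ≤ μ a) (k : ℕ) :
    ∃ S : Finset (Fin M), S.card ≤ k ∧ ∀ r : Fin M → ℝ, (∀ a, 0 ≤ r a) → (∀ a, r a ≤ 1) →
      (∑ a, r a ≤ (k:ℝ)) → ∑ a, μ a * r a ≤ ∑ a ∈ S, μ a := by
  by_cases hk : M ≤ k
  · refine ⟨Finset.univ, by simpa using hk, fun r h0 h1 _ => ?_⟩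
    refine Finset.sum_le_sum fun a _ => ?_
    calc μ a * r a ≤ μ a * 1 := mul_le_mul_of_nonneg_left (h1 a) (hμ a)
    _ = μ a := mul_one _
  · push_neg at hk
    rcases Nat.eq_zero_or_pos k with rfl | hk0
    · refine ⟨∅, le_rfl, fun r h0 h1 hsum => ?_⟩
      have hz : ∀ a, r a = 0 := by
        intro a
        have h1' : ∑ b, r b ≤ 0 := by simpa using hsum
        have := Finset.sum_nonneg (fun b (_ : b ∈ Finset.univ) => h0 b)
        have hle : r a ≤ ∑ b, r b :=
          Finset.single_le_sum (fun b _ => h0 b) (Finset.mem_univ a)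
        nlinarith [h0 a]
      simp [hz]
    · obtain ⟨S, hcard, hsep⟩ := exists_sep_set μ k (le_of_lt hk)
      have hSne : S.Nonempty := Finset.card_pos.mp (by omega)
      obtain ⟨a0, ha0S, ha0min⟩ := Finset.exists_min_image S μ hSne
      set m := μ a0 with hm
      refine ⟨S, le_of_eq hcard, fun r h0 h1 hsum => ?_⟩
      have hA : ∑ a ∈ S, μ a * r a ≤ ∑ a ∈ S, (μ a - m * (1 - r a)) := by
        refine Finset.sum_le_sum fun a ha => ?_
        have h1a := h1 a
        have hma := ha0min a ha
        nlinarith [h0 a]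
      have hB : ∑ a ∈ Sᶜ, μ a * r a ≤ ∑ a ∈ Sᶜ, m * r a := by
        refine Finset.sum_le_sum fun a ha => ?_
        have := hsep a0 ha0S a (Finset.mem_compl.mp ha)
        exact mul_le_mul_of_nonneg_right this (h0 a)
      have hsplit : ∑ a, μ a * r a = ∑ a ∈ S, μ a * r a + ∑ a ∈ Sᶜ, μ a * r a :=
        (Finset.sum_add_sum_compl S _).symm
      have hrsplit : ∑ a ∈ S, r a + ∑ a ∈ Sᶜ, r a = ∑ a, r a :=
        Finset.sum_add_sum_compl S _
      have hm0 : 0 ≤ m := hμ a0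
      have expand : ∑ a ∈ S, (μ a - m * (1 - r a))
          = ∑ a ∈ S, μ a - m * (k - ∑ a ∈ S, r a) := by
        rw [Finset.sum_sub_distrib, ← Finset.mul_sum]
        congr 2
        rw [Finset.sum_sub_distrib, Finset.sum_const, hcard]
        simp
      have expand2 : ∑ a ∈ Sᶜ, m * r a = m * ∑ a ∈ Sᶜ, r a := by
        rw [Finset.mul_sum]
      have final : ∑ a ∈ S, μ a - m * ((k:ℝ) - ∑ a ∈ S, r a) + m * ∑ a ∈ Sᶜ, r a
          ≤ ∑ a ∈ S, μ a := by
        nlinarith [hsum, hrsplit]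
      calc ∑ a, μ a * r a = ∑ a ∈ S, μ a * r a + ∑ a ∈ Sᶜ, μ a * r a := hsplit
        _ ≤ (∑ a ∈ S, μ a - m * ((k:ℝ) - ∑ a ∈ S, r a)) + m * ∑ a ∈ Sᶜ, r a := by
            rw [← expand, ← expand2]; exact add_le_add hA hB
        _ ≤ ∑ a ∈ S, μ a := final


lemma tens_add_one {M N : ℕ} (X Y : Matrix (Fin M) (Fin M) ℂ) :
    tens (X + Y) (1 : Matrix (Fin N) (Fin N) ℂ) = tens X 1 + tens Y 1 := by
  ext p q
  simp [tens, add_mul]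

lemma tens_smul_one {M N : ℕ} (c : ℂ) (X : Matrix (Fin M) (Fin M) ℂ) :
    tens (c • X) (1 : Matrix (Fin N) (Fin N) ℂ) = c • tens X 1 := by
  ext p q
  simp [tens, mul_assoc]

lemma psd_smul_one {κ : Type*} [Fintype κ] [DecidableEq κ] {ε : ℝ} (hε : 0 ≤ ε) :
    (((ε : ℂ)) • (1 : Matrix κ κ ℂ)).PosSemidef := by
  have h : ((ε:ℂ)) • (1 : Matrix κ κ ℂ) = Matrix.diagonal (fun _ => (ε:ℂ)) := by
    ext i j
    by_cases hij : i = j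
    · subst hij; simp [Matrix.one_apply, Matrix.diagonal_apply]
    · simp [Matrix.one_apply, Matrix.diagonal_apply, hij]
  rw [h]
  exact Matrix.PosSemidef.diagonal (fun i => Complex.zero_le_real.mpr hε)

lemma dot_conj {κ : Type*} [Fintype κ] (X : Matrix κ κ ℂ) (u u' : κ → ℂ) :
    star (X *ᵥ u) ⬝ᵥ (X *ᵥ u') = star u ⬝ᵥ ((Xᴴ * X) *ᵥ u') := by
  rw [Matrix.star_mulVec, Matrix.dotProduct_mulVec, Matrix.vecMul_vecMul,
    ← Matrix.dotProduct_mulVec]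

lemma diag_qf {κ : Type*} [Fintype κ] [DecidableEq κ] (d : κ → ℝ) (x : κ → ℂ) :
    star x ⬝ᵥ (Matrix.diagonal (fun p => (d p : ℂ)) *ᵥ x)
      = ((∑ p, d p * Complex.normSq (x p) : ℝ) : ℂ) := by
  push_cast
  simp only [dotProduct, Matrix.mulVec_diagonal, Pi.star_apply, RCLike.star_def]
  refine Finset.sum_congr rfl fun p _ => ?_
  rw [show (starRingEnd ℂ) (x p) * ((d p : ℂ) * x p) = (d p : ℂ) * ((starRingEnd ℂ) (x p) * x p) by ring]
  rw [← Complex.normSq_eq_conj_mul_self]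

lemma sqrt_inv_sq_mul {l : ℝ} (hl : 0 < l) :
    ((Real.sqrt l : ℝ) : ℂ)⁻¹ * (((Real.sqrt l : ℝ) : ℂ)⁻¹ * (l:ℂ)) = 1 := by
  have h1 : Real.sqrt l ≠ 0 := by positivity
  have : ((Real.sqrt l)⁻¹ * ((Real.sqrt l)⁻¹ * l) : ℝ) = 1 := by
    rw [← mul_assoc, ← mul_inv, Real.mul_self_sqrt hl.le]
    exact inv_mul_cancel₀ hl.ne'
  exact_mod_cast this

lemma sqrt_inv_mul {l : ℝ} (hl : 0 < l) :
    ((Real.sqrt l : ℝ) : ℂ)⁻¹ * (l:ℂ) = ((Real.sqrt l : ℝ) : ℂ) := by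
  have h1 : Real.sqrt l ≠ 0 := by positivity
  have : ((Real.sqrt l)⁻¹ * l : ℝ) = Real.sqrt l := by
    have h2 : (Real.sqrt l)⁻¹ * l = (Real.sqrt l)⁻¹ * (Real.sqrt l * Real.sqrt l) := by
      rw [Real.mul_self_sqrt hl.le]
    rw [h2, ← mul_assoc, inv_mul_cancel₀ h1, one_mul]
  exact_mod_cast this

lemma sqrt_mul_sqrt {l : ℝ} (hl : 0 ≤ l) :
    ((Real.sqrt l : ℝ) : ℂ) * ((Real.sqrt l : ℝ) : ℂ) = (l : ℂ) := by
  exact_mod_cast congrArg (Complex.ofReal) (Real.mul_self_sqrt hl)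

lemma mulVec_tensUH {M N : ℕ} (X : Matrix (Fin M) (Fin M) ℂ) (ξ : Fin M × Fin N → ℂ)
    (a : Fin M) (b : Fin N) :
    ((tens Xᴴ (1 : Matrix (Fin N) (Fin N) ℂ)) *ᵥ ξ) (a, b)
      = star (emb (fun p => X p a) b) ⬝ᵥ ξ := by
  simp only [Matrix.mulVec, dotProduct, Fintype.sum_prod_type, tens, emb,
    Matrix.one_apply, Matrix.conjTranspose_apply, Pi.star_apply, RCLike.star_def]
  simp only [apply_ite (starRingEnd ℂ), map_zero, ite_mul, zero_mul, mul_ite, mul_zero]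
  refine Finset.sum_congr rfl fun c _ => ?_
  refine Finset.sum_congr rfl fun d _ => ?_
  by_cases hd : d = b
  · subst hd; simp
  · simp [hd, Ne.symm hd]

open scoped MatrixOrder

lemma exists_r {M N : ℕ} (ρ : Matrix (Fin M × Fin N) (Fin M × Fin N) ℂ)
    (hρpsd : ρ.PosSemidef) (hA : (ptrB ρ).IsHermitian)
    (hred : (tens (ptrB ρ) (1 : Matrix (Fin N) (Fin N) ℂ) - ρ).PosSemidef)
    (T : Finset (Fin M × Fin N)) {ε : ℝ} (hε : 0 < ε) :
    ∃ r : Fin M → ℝ, (∀ a, 0 ≤ r a) ∧ (∀ a, r a ≤ 1) ∧ (∑ a, r a ≤ (T.card : ℝ)) ∧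
      ∑ i ∈ T, hρpsd.1.eigenvalues i ≤ ∑ a, hA.eigenvalues a * r a + ε * T.card := by
  classical
  set σ := ptrB ρ with hσ
  set μ := hA.eigenvalues with hμdef
  set lam := hρpsd.1.eigenvalues with hlamdef
  have hlam0 : ∀ i, 0 ≤ lam i := hρpsd.eigenvalues_nonneg
  set σε : Matrix (Fin M) (Fin M) ℂ := σ + (ε:ℂ) • 1 with hσε
  have hone : (((ε:ℂ)) • (1:Matrix (Fin M) (Fin M) ℂ)).PosSemidef := psd_smul_one (le_of_lt hε)
  have hσpsd : σ.PosSemidef := by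
    refine Matrix.PosSemidef.of_dotProduct_mulVec_nonneg hA fun x => ?_
    rw [hσ, ← ptrB_qf]
    exact Finset.sum_nonneg fun b _ => hρpsd.dotProduct_mulVec_nonneg _
  have hσεpsd : σε.PosSemidef := hσpsd.add hone
  have hσεpd : σε.PosDef := by
    refine Matrix.PosDef.of_dotProduct_mulVec_pos hσεpsd.1 fun x hx => ?_
    have h1 : 0 ≤ star x ⬝ᵥ σ *ᵥ x := hσpsd.dotProduct_mulVec_nonneg x
    have h2 : star x ⬝ᵥ (((ε:ℂ) • (1:Matrix (Fin M) (Fin M) ℂ)) *ᵥ x) = (ε:ℂ) * (star x ⬝ᵥ x) := by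
      rw [Matrix.smul_mulVec, Matrix.one_mulVec, dotProduct_smul, smul_eq_mul]
    have h3 : (0:ℂ) < (ε:ℂ) * (star x ⬝ᵥ x) := by
      rw [dot_self_eq, ← Complex.ofReal_mul]
      rw [Complex.zero_lt_real]
      have hpos : 0 < ∑ i, Complex.normSq (x i) := by
        obtain ⟨i, hi⟩ := Function.ne_iff.mp hx
        exact Finset.sum_pos' (fun j _ => Complex.normSq_nonneg _)
          ⟨i, Finset.mem_univ i, Complex.normSq_pos.mpr hi⟩
      exact mul_pos hε hpos
    have h4 : star x ⬝ᵥ σε *ᵥ x = star x ⬝ᵥ σ *ᵥ x + (ε:ℂ) * (star x ⬝ᵥ x) := by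
      rw [hσε, Matrix.add_mulVec, dotProduct_add, h2]
    rw [h4]
    calc (0:ℂ) < (ε:ℂ) * (star x ⬝ᵥ x) := h3
      _ ≤ star x ⬝ᵥ σ *ᵥ x + (ε:ℂ) * (star x ⬝ᵥ x) := le_add_of_nonneg_left h1
  -- square root of σε and its inverse
  set Am := CFC.sqrt σε with hAm
  have hApsd : Am.PosSemidef := Matrix.nonneg_iff_posSemidef.mp (CFC.sqrt_nonneg σε)
  have hAh : Am.IsHermitian := hApsd.1
  have hAA : Am * Am = σε := CFC.sqrt_mul_sqrt_self σε hσεpsd.nonneg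
  have hdet : IsUnit Am.det := by
    have hmul : Am.det * Am.det = σε.det := by rw [← Matrix.det_mul, hAA]
    have h2 := hσεpd.det_pos
    rw [isUnit_iff_ne_zero]
    intro h0
    rw [h0, mul_zero] at hmul
    exact h2.ne' hmul.symm
  set Bm := Am⁻¹ with hBm
  have hABm : Am * Bm = 1 := Matrix.mul_nonsing_inv _ hdet
  have hBmA : Bm * Am = 1 := Matrix.nonsing_inv_mul _ hdet
  have hBh : Bm.IsHermitian := hAh.inv
  -- lifted operators
  set tA := tens Am (1 : Matrix (Fin N) (Fin N) ℂ) with htA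
  set tB := tens Bm (1 : Matrix (Fin N) (Fin N) ℂ) with htB
  have htAh : tAᴴ = tA := by rw [htA, tens_conjT_one, hAh.eq]
  have htBh : tBᴴ = tB := by rw [htB, tens_conjT_one, hBh.eq]
  have htAB : tA * tB = 1 := by rw [htA, htB, tens_mul_tens_one, hABm, tens_one_one]
  have htBA : tB * tA = 1 := by rw [htA, htB, tens_mul_tens_one, hBmA, tens_one_one]
  set Cm := tB * ρ * tB with hCm
  have hCpsd : Cm.PosSemidef := by
    have h := hρpsd.mul_mul_conjTranspose_same tB
    rwa [htBh] at h
  have hICpsd : (1 - Cm).PosSemidef := by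
    have hD : (tens σε (1:Matrix (Fin N) (Fin N) ℂ) - ρ).PosSemidef := by
      have heq : tens σε (1:Matrix (Fin N) (Fin N) ℂ) - ρ
          = (tens σ 1 - ρ) + (ε:ℂ) • (1 : Matrix (Fin M × Fin N) (Fin M × Fin N) ℂ) := by
        rw [hσε, tens_add_one, tens_smul_one, tens_one_one]
        abel
      rw [heq]
      exact hred.add (psd_smul_one (le_of_lt hε))
    have hconj := hD.mul_mul_conjTranspose_same tB
    rw [htBh] at hconj
    have heq2 : tB * (tens σε (1:Matrix (Fin N) (Fin N) ℂ) - ρ) * tB = 1 - Cm := by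
      rw [Matrix.mul_sub, Matrix.sub_mul, hCm]
      congr 1
      rw [htB, tens_mul_tens_one, tens_mul_tens_one]
      have hBσB : Bm * σε * Bm = 1 := by
        rw [← hAA]
        calc Bm * (Am * Am) * Bm = (Bm * Am) * (Am * Bm) := by noncomm_ring
        _ = 1 := by rw [hBmA, hABm, one_mul]
      rw [hBσB, tens_one_one]
    rwa [heq2] at hconj
  set Csq := CFC.sqrt Cm with hCsqdef
  have hCsqpsd : Csq.PosSemidef := Matrix.nonneg_iff_posSemidef.mp (CFC.sqrt_nonneg Cm)
  have hCsqh : Csq.IsHermitian := hCsqpsd.1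
  have hCsqsq : Csq * Csq = Cm := CFC.sqrt_mul_sqrt_self Cm hCpsd.nonneg
  have hCdot : ∀ u u' : (Fin M × Fin N) → ℂ,
      star (Csq *ᵥ u) ⬝ᵥ (Csq *ᵥ u') = star u ⬝ᵥ (Cm *ᵥ u') := by
    intro u u'
    rw [dot_conj, hCsqh.eq, hCsqsq]
  set K := Csq * tA with hKdef
  have hKH : Kᴴ = tA * Csq := by rw [hKdef, Matrix.conjTranspose_mul, htAh, hCsqh.eq]
  have hKK : Kᴴ * K = ρ := by
    rw [hKH, hKdef]
    calc tA * Csq * (Csq * tA) = tA * (Csq * Csq) * tA := by noncomm_ring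
    _ = tA * (tB * ρ * tB) * tA := by rw [hCsqsq, hCm]
    _ = (tA * tB) * ρ * (tB * tA) := by noncomm_ring
    _ = ρ := by rw [htAB, htBA, one_mul, mul_one]
  have hKdot : ∀ u u' : (Fin M × Fin N) → ℂ,
      star (K *ᵥ u) ⬝ᵥ (K *ᵥ u') = star u ⬝ᵥ (ρ *ᵥ u') := by
    intro u u'
    rw [dot_conj, hKK]
  -- spectral decomposition of ρ
  have hρh : ρ.IsHermitian := hρpsd.1
  set V : Matrix (Fin M × Fin N) (Fin M × Fin N) ℂ :=
    (Matrix.IsHermitian.eigenvectorUnitary hρh : Matrix (Fin M × Fin N) (Fin M × Fin N) ℂ) with hV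
  have hVu : Vᴴ * V = 1 := by
    rw [hV, ← Matrix.star_eq_conjTranspose]
    exact Matrix.mem_unitaryGroup_iff'.mp (Matrix.IsHermitian.eigenvectorUnitary hρh).2
  have hspec : ρ * V = V * Matrix.diagonal (RCLike.ofReal ∘ lam) := by
    conv_lhs => rw [hρh.spectral_theorem]
    rw [Unitary.conjStarAlgAut_apply, Matrix.star_eq_conjTranspose, mul_assoc, hVu, mul_one]
  set v : (Fin M × Fin N) → (Fin M × Fin N) → ℂ := fun i p => V p i with hv
  have hveig : ∀ i, ρ *ᵥ v i = ((lam i : ℝ) : ℂ) • v i := by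
    intro i; funext p
    have h1 : (ρ * V) p i
        = (V * Matrix.diagonal ((RCLike.ofReal ∘ lam) : (Fin M × Fin N) → ℂ)) p i := by
      rw [hspec]
    rw [Matrix.mul_diagonal] at h1
    have h2 : (ρ *ᵥ v i) p = (ρ * V) p i := by
      rw [Matrix.mul_apply, Matrix.mulVec, dotProduct]
    rw [h2, h1]
    simp [hv, Function.comp, mul_comm]
  have hvon : ∀ i j, star (v i) ⬝ᵥ v j = if i = j then 1 else 0 := by
    intro i j
    have h : (Vᴴ * V) i j = (1 : Matrix (Fin M × Fin N) (Fin M × Fin N) ℂ) i j := by rw [hVu]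
    rw [Matrix.mul_apply, Matrix.one_apply] at h
    simp only [Matrix.conjTranspose_apply] at h
    simpa [dotProduct, hv] using h
  -- the w and z vectors
  set Tpos := T.filter (fun i => 0 < lam i) with hTpos
  set w : (Fin M × Fin N) → (Fin M × Fin N) → ℂ :=
    fun i => (((Real.sqrt (lam i) : ℝ) : ℂ))⁻¹ • (K *ᵥ v i) with hw
  set z : (Fin M × Fin N) → (Fin M × Fin N) → ℂ := fun i => Csq *ᵥ w i with hz
  have hwon : ∀ i ∈ Tpos, ∀ j ∈ Tpos, star (w i) ⬝ᵥ w j = if i = j then 1 else 0 := by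
    intro i hi j hj
    have hli : 0 < lam i := (Finset.mem_filter.mp hi).2
    have hlj : 0 < lam j := (Finset.mem_filter.mp hj).2
    rw [hw]
    simp only []
    rw [star_smul, smul_dotProduct, dotProduct_smul]
    rw [hKdot, hveig j, dotProduct_smul, hvon i j]
    rw [star_inv₀]
    rw [RCLike.star_def, Complex.conj_ofReal]
    by_cases hij : i = j
    · subst hij
      rw [if_pos rfl]
      simp only [smul_eq_mul, mul_one]
      exact sqrt_inv_sq_mul hli
    · rw [if_neg hij]
      simp
  -- action of tA on z
  have hAz : ∀ i ∈ Tpos, tA *ᵥ z i = ((Real.sqrt (lam i) : ℝ) : ℂ) • v i := by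
    intro i hi
    have hli : 0 < lam i := (Finset.mem_filter.mp hi).2
    rw [hz, hw]
    simp only []
    rw [Matrix.mulVec_smul, Matrix.mulVec_smul]
    rw [Matrix.mulVec_mulVec, Matrix.mulVec_mulVec]
    have hKform : tA * Csq * K = ρ := by rw [← hKH, hKK]
    rw [hKform, hveig i]
    rw [smul_smul, sqrt_inv_mul hli]
  -- key1 : quadratic form of σε at z i
  have key1 : ∀ i ∈ Tpos, star (z i) ⬝ᵥ ((tens σε (1 : Matrix (Fin N) (Fin N) ℂ)) *ᵥ z i)
      = ((lam i : ℝ) : ℂ) := by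
    intro i hi
    have hli : 0 < lam i := (Finset.mem_filter.mp hi).2
    have htens : tens σε (1 : Matrix (Fin N) (Fin N) ℂ) = tA * tA := by
      rw [htA, tens_mul_tens_one, hAA]
    rw [htens, ← Matrix.mulVec_mulVec]
    rw [← dot_shift' htAh (z i) (tA *ᵥ z i)]
    rw [hAz i hi]
    rw [star_smul, smul_dotProduct, dotProduct_smul]
    rw [hvon i i, if_pos rfl]
    rw [RCLike.star_def, Complex.conj_ofReal]
    simp only [smul_eq_mul, mul_one]
    exact sqrt_mul_sqrt (le_of_lt hli)
  -- key2 : norms of z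
  have key2 : ∀ i ∈ Tpos, star (z i) ⬝ᵥ z i ≤ 1 := by
    intro i hi
    rw [hz]
    simp only []
    rw [hCdot]
    have h0 := hICpsd.dotProduct_mulVec_nonneg (w i)
    rw [Matrix.sub_mulVec, dotProduct_sub, Matrix.one_mulVec] at h0
    have h1 : star (w i) ⬝ᵥ w i = 1 := by rw [hwon i hi i hi, if_pos rfl]
    rw [h1] at h0
    exact sub_nonneg.mp h0
  -- spectral decomposition of σ
  set U : Matrix (Fin M) (Fin M) ℂ :=
    (Matrix.IsHermitian.eigenvectorUnitary hA : Matrix (Fin M) (Fin M) ℂ) with hU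
  have hU'U : Uᴴ * U = 1 := by
    rw [hU, ← Matrix.star_eq_conjTranspose]
    exact Matrix.mem_unitaryGroup_iff'.mp (Matrix.IsHermitian.eigenvectorUnitary hA).2
  have hUU' : U * Uᴴ = 1 := by
    rw [hU, ← Matrix.star_eq_conjTranspose]
    exact Matrix.mem_unitaryGroup_iff.mp (Matrix.IsHermitian.eigenvectorUnitary hA).2
  have hσspec : σ = U * Matrix.diagonal ((RCLike.ofReal ∘ μ) : Fin M → ℂ) * Uᴴ := by
    rw [hU, ← Matrix.star_eq_conjTranspose, hμdef]
    have hst := hA.spectral_theorem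
    rw [Unitary.conjStarAlgAut_apply] at hst
    exact hst
  set tU := tens U (1 : Matrix (Fin N) (Fin N) ℂ) with htU
  set tU' := tens Uᴴ (1 : Matrix (Fin N) (Fin N) ℂ) with htU'
  have htUc : tUᴴ = tU' := by rw [htU, htU', tens_conjT_one]
  have htU'c : tU'ᴴ = tU := by
    rw [htU, htU', tens_conjT_one, Matrix.conjTranspose_conjTranspose]
  have htUtU' : tU * tU' = 1 := by
    rw [htU, htU', tens_mul_tens_one, hUU', tens_one_one]
  set y : (Fin M × Fin N) → (Fin M × Fin N) → ℂ := fun i => tU' *ᵥ z i with hy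
  have hyi : ∀ i, tU' *ᵥ z i = y i := fun i => rfl
  have htensσ : tens σ (1 : Matrix (Fin N) (Fin N) ℂ)
      = tU * (Matrix.diagonal (fun p : Fin M × Fin N => ((μ p.1 : ℝ) : ℂ)) * tU') := by
    rw [hσspec, mul_assoc, ← tens_mul_tens_one, ← tens_mul_tens_one, tens_diagonal_one]
    rfl
  -- key3 : σ-quadratic form at z i in terms of y
  have key3 : ∀ i, star (z i) ⬝ᵥ ((tens σ (1 : Matrix (Fin N) (Fin N) ℂ)) *ᵥ z i)
      = ((∑ p : Fin M × Fin N, μ p.1 * Complex.normSq (y i p) : ℝ) : ℂ) := by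
    intro i
    rw [htensσ, ← Matrix.mulVec_mulVec]
    rw [← dot_shift tU (z i)]
    rw [htUc, ← Matrix.mulVec_mulVec, hyi i]
    exact diag_qf (fun p : Fin M × Fin N => μ p.1) (y i)
  -- the occupation numbers
  set r : Fin M → ℝ := fun a => ∑ i ∈ Tpos, ∑ b, Complex.normSq (y i (a, b)) with hr
  have hr0 : ∀ a, 0 ≤ r a := by
    intro a
    exact Finset.sum_nonneg fun i _ =>
      Finset.sum_nonneg fun b _ => Complex.normSq_nonneg _
  -- key4 : rewriting the sum of σ-forms
  have key4 : ∑ i ∈ Tpos, (∑ p : Fin M × Fin N, μ p.1 * Complex.normSq (y i p) : ℝ)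
      = ∑ a, μ a * r a := by
    rw [hr]
    simp only [Fintype.sum_prod_type]
    rw [Finset.sum_comm]
    refine Finset.sum_congr rfl fun a _ => ?_
    rw [Finset.mul_sum]
    refine Finset.sum_congr rfl fun i _ => ?_
    rw [Finset.mul_sum]
  -- key5 : r a ≤ 1
  have hyab : ∀ i, ∀ a : Fin M, ∀ b : Fin N,
      y i (a, b) = star (emb (fun p => U p a) b) ⬝ᵥ z i := by
    intro i a b
    rw [← hyi i, htU']
    exact mulVec_tensUH U (z i) a b
  have key5 : ∀ a, r a ≤ 1 := by
    intro a
    set uc : Fin M → ℂ := fun p => U p a with huc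
    set q' : Fin M → ℂ := Bm *ᵥ uc with hq'
    have hstep1 : ∀ i ∈ Tpos, ∀ b, Complex.normSq (y i (a, b))
        = Complex.normSq (star (Csq *ᵥ emb uc b) ⬝ᵥ w i) := by
      intro i hi b
      rw [hyab i a b, hz]
      simp only []
      rw [← dot_shift' hCsqh (emb uc b) (w i)]
    have hra : r a = ∑ b, ∑ i ∈ Tpos, Complex.normSq (star (Csq *ᵥ emb uc b) ⬝ᵥ w i) := by
      rw [hr]
      simp only []
      rw [Finset.sum_comm]
      exact Finset.sum_congr rfl fun b _ => Finset.sum_congr rfl fun i hi => hstep1 i hi b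
    have hbess : ∀ b : Fin N, ∑ i ∈ Tpos, Complex.normSq (star (Csq *ᵥ emb uc b) ⬝ᵥ w i)
        ≤ (star (Csq *ᵥ emb uc b) ⬝ᵥ (Csq *ᵥ emb uc b)).re :=
      fun b => bessel Tpos w hwon (Csq *ᵥ emb uc b)
    have hgb : ∀ b : Fin N, star (Csq *ᵥ emb uc b) ⬝ᵥ (Csq *ᵥ emb uc b)
        = star (emb q' b) ⬝ᵥ (ρ *ᵥ emb q' b) := by
      intro b
      rw [hCdot]
      rw [hCm, ← Matrix.mulVec_mulVec, ← Matrix.mulVec_mulVec]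
      rw [← dot_shift' htBh (emb uc b)]
      rw [htB, mulVec_tens_emb, ← hq']
    have hsumb : ∑ b, star (emb q' b) ⬝ᵥ (ρ *ᵥ emb q' b) = star q' ⬝ᵥ (σ *ᵥ q') := by
      rw [hσ]
      exact ptrB_qf ρ q'
    have hq1 : star q' ⬝ᵥ (σε *ᵥ q') = 1 := by
      have hAq : Am *ᵥ q' = uc := by
        rw [hq', Matrix.mulVec_mulVec, hABm, Matrix.one_mulVec]
      have h1 : star q' ⬝ᵥ (σε *ᵥ q') = star (Am *ᵥ q') ⬝ᵥ (Am *ᵥ q') := by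
        rw [dot_conj, hAh.eq, hAA]
      rw [h1, hAq]
      have h2 : (Uᴴ * U) a a = (1 : Matrix (Fin M) (Fin M) ℂ) a a := by rw [hU'U]
      rw [Matrix.mul_apply, Matrix.one_apply_eq] at h2
      simp only [Matrix.conjTranspose_apply] at h2
      simpa [dotProduct, huc] using h2
    have hqσ : star q' ⬝ᵥ (σ *ᵥ q') ≤ 1 := by
      have hsplitq : star q' ⬝ᵥ (σε *ᵥ q')
          = star q' ⬝ᵥ (σ *ᵥ q') + (ε:ℂ) * (star q' ⬝ᵥ q') := by
        rw [hσε, Matrix.add_mulVec, dotProduct_add, Matrix.smul_mulVec,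
          Matrix.one_mulVec, dotProduct_smul, smul_eq_mul]
      have hnn : 0 ≤ (ε:ℂ) * (star q' ⬝ᵥ q') := by
        rw [dot_self_eq, ← Complex.ofReal_mul]
        rw [Complex.zero_le_real]
        exact mul_nonneg hε.le (Finset.sum_nonneg fun p _ => Complex.normSq_nonneg _)
      rw [hsplitq] at hq1
      calc star q' ⬝ᵥ (σ *ᵥ q') ≤ star q' ⬝ᵥ (σ *ᵥ q') + (ε:ℂ) * (star q' ⬝ᵥ q') :=
            le_add_of_nonneg_right hnn
        _ = 1 := hq1
    calc r a = ∑ b, ∑ i ∈ Tpos, Complex.normSq (star (Csq *ᵥ emb uc b) ⬝ᵥ w i) := hra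
      _ ≤ ∑ b, (star (Csq *ᵥ emb uc b) ⬝ᵥ (Csq *ᵥ emb uc b)).re :=
          Finset.sum_le_sum fun b _ => hbess b
      _ = (star q' ⬝ᵥ (σ *ᵥ q')).re := by
          rw [← Complex.re_sum]
          congr 1
          rw [← hsumb]
          exact Finset.sum_congr rfl fun b _ => hgb b
      _ ≤ 1 := by
          have := (Complex.le_def.mp hqσ).1
          simpa using this
  -- key6 : total occupation
  have hzz1 : ∀ i ∈ Tpos, (∑ p, Complex.normSq (y i p) : ℝ) ≤ 1 := by
    intro i hi
    have h1 : star (y i) ⬝ᵥ y i = star (z i) ⬝ᵥ z i := by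
      rw [← hyi i, dot_conj, htU'c, htUtU', Matrix.one_mulVec]
    have h2 := key2 i hi
    rw [← h1] at h2
    have h3 := (Complex.le_def.mp h2).1
    rw [dot_self_eq, Complex.ofReal_re] at h3
    simpa using h3
  have key6 : ∑ a, r a ≤ (T.card : ℝ) := by
    have h1 : ∑ a, r a = ∑ i ∈ Tpos, (∑ p : Fin M × Fin N, Complex.normSq (y i p) : ℝ) := by
      rw [hr]
      rw [Finset.sum_comm]
      refine Finset.sum_congr rfl fun i _ => ?_
      rw [Fintype.sum_prod_type]
    rw [h1]
    calc ∑ i ∈ Tpos, (∑ p : Fin M × Fin N, Complex.normSq (y i p) : ℝ)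
        ≤ ∑ _i ∈ Tpos, (1:ℝ) := Finset.sum_le_sum hzz1
      _ = Tpos.card := by simp
      _ ≤ (T.card : ℝ) := by
          have := Finset.card_filter_le T (fun i => 0 < lam i)
          rw [hTpos]
          exact_mod_cast this
  -- final assembly
  refine ⟨r, hr0, key5, key6, ?_⟩
  have hsplit : ∑ i ∈ T, lam i = ∑ i ∈ Tpos, lam i := by
    rw [hTpos]
    rw [← Finset.sum_filter_add_sum_filter_not T (fun i => 0 < lam i) lam]
    have hz0 : ∑ i ∈ T.filter (fun i => ¬ 0 < lam i), lam i = 0 :=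
      Finset.sum_eq_zero fun i hi =>
        le_antisymm (not_lt.mp (Finset.mem_filter.mp hi).2) (hlam0 i)
    rw [hz0, add_zero]
  have hperi : ∀ i ∈ Tpos, lam i
      = (star (z i) ⬝ᵥ ((tens σ (1:Matrix (Fin N) (Fin N) ℂ)) *ᵥ z i)).re
        + ε * (star (z i) ⬝ᵥ z i).re := by
    intro i hi
    have h := key1 i hi
    have hexp : tens σε (1:Matrix (Fin N) (Fin N) ℂ)
        = tens σ 1 + (ε:ℂ) • (1 : Matrix (Fin M × Fin N) (Fin M × Fin N) ℂ) := by
      rw [hσε, tens_add_one, tens_smul_one, tens_one_one]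
    rw [hexp, Matrix.add_mulVec, dotProduct_add] at h
    have h2 : star (z i) ⬝ᵥ (((ε:ℂ) • (1:Matrix (Fin M × Fin N) (Fin M × Fin N) ℂ)) *ᵥ z i)
        = (ε:ℂ) * (star (z i) ⬝ᵥ z i) := by
      rw [Matrix.smul_mulVec, Matrix.one_mulVec, dotProduct_smul, smul_eq_mul]
    rw [h2] at h
    have h3 := congrArg Complex.re h
    rw [Complex.add_re, Complex.ofReal_re, Complex.re_ofReal_mul] at h3
    linarith [h3]
  have hTcard : (Tpos.card : ℝ) ≤ (T.card : ℝ) := by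
    have := Finset.card_filter_le T (fun i => 0 < lam i)
    rw [hTpos]
    exact_mod_cast this
  calc ∑ i ∈ T, lam i = ∑ i ∈ Tpos, lam i := hsplit
    _ = ∑ i ∈ Tpos, ((star (z i) ⬝ᵥ ((tens σ (1:Matrix (Fin N) (Fin N) ℂ)) *ᵥ z i)).re
          + ε * (star (z i) ⬝ᵥ z i).re) := Finset.sum_congr rfl hperi
    _ = (∑ i ∈ Tpos, (star (z i) ⬝ᵥ ((tens σ (1:Matrix (Fin N) (Fin N) ℂ)) *ᵥ z i)).re)
          + ε * ∑ i ∈ Tpos, (star (z i) ⬝ᵥ z i).re := by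
        rw [Finset.sum_add_distrib, Finset.mul_sum]
    _ ≤ (∑ a, μ a * r a) + ε * (T.card : ℝ) := by
        have p1 : ∑ i ∈ Tpos, (star (z i) ⬝ᵥ ((tens σ (1:Matrix (Fin N) (Fin N) ℂ)) *ᵥ z i)).re
            = ∑ a, μ a * r a := by
          rw [← key4]
          refine Finset.sum_congr rfl fun i _ => ?_
          rw [key3 i, Complex.ofReal_re]
        have p2 : ∑ i ∈ Tpos, (star (z i) ⬝ᵥ z i).re ≤ (T.card : ℝ) := by
          have each : ∀ i ∈ Tpos, (star (z i) ⬝ᵥ z i).re ≤ 1 := by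
            intro i hi
            have := (Complex.le_def.mp (key2 i hi)).1
            simpa using this
          calc ∑ i ∈ Tpos, (star (z i) ⬝ᵥ z i).re ≤ ∑ _i ∈ Tpos, (1:ℝ) :=
                Finset.sum_le_sum each
            _ = Tpos.card := by simp
            _ ≤ (T.card : ℝ) := hTcard
        exact add_le_add (le_of_eq p1) (mul_le_mul_of_nonneg_left p2 hε.le)



lemma sum_eigenvalues_eq_trace' {κ : Type*} [Fintype κ] [DecidableEq κ] {X : Matrix κ κ ℂ}
    (hX : X.IsHermitian) : ((∑ i, hX.eigenvalues i : ℝ) : ℂ) = X.trace := by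
  rw [hX.trace_eq_sum_eigenvalues]
  push_cast
  rfl

lemma trace_ptrB {M N : ℕ} (ρ : Matrix (Fin M × Fin N) (Fin M × Fin N) ℂ) :
    (ptrB ρ).trace = ρ.trace := by
  simp [Matrix.trace, ptrB, Matrix.diag, Fintype.sum_prod_type]

end RedMaj

/-- the reduction criterion ρ_A ⊗ I_B ≥ ρ_AB implies that the
eigenvalues of ρ_A majorize those of ρ_AB. -/
theorem reduction_implies_majorization {M N : ℕ}
    (ρ : Matrix (Fin M × Fin N) (Fin M × Fin N) ℂ)
    (hρ : IsDensity ρ) (hA : (ptrB ρ).IsHermitian)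
    (hred : (tens (ptrB ρ) (1 : Matrix (Fin N) (Fin N) ℂ) - ρ).PosSemidef) :
    Majorizes hA.eigenvalues hρ.1.1.eigenvalues := by
  classical
  have hσpsd : (ptrB ρ).PosSemidef := by
    refine Matrix.PosSemidef.of_dotProduct_mulVec_nonneg hA fun x => ?_
    rw [← RedMaj.ptrB_qf]
    exact Finset.sum_nonneg fun b _ => hρ.1.dotProduct_mulVec_nonneg _
  constructor
  · intro T
    obtain ⟨S, hScard, hSbound⟩ :=
      RedMaj.kyfan_comb hA.eigenvalues (fun a => hσpsd.eigenvalues_nonneg a) T.card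
    refine ⟨S, hScard, ?_⟩
    refine le_of_forall_pos_le_add ?_
    intro δ hδ
    have hcpos : (0:ℝ) < (T.card : ℝ) + 1 := by positivity
    set ε := δ / ((T.card : ℝ) + 1) with hεdef
    have hε : 0 < ε := by positivity
    obtain ⟨r, h0, h1, h2, hmain⟩ := RedMaj.exists_r ρ hρ.1 hA hred T hε
    calc ∑ i ∈ T, hρ.1.1.eigenvalues i ≤ ∑ a, hA.eigenvalues a * r a + ε * T.card := hmain
      _ ≤ ∑ a ∈ S, hA.eigenvalues a + ε * T.card :=
          add_le_add_left (hSbound r h0 h1 h2) _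
      _ ≤ ∑ a ∈ S, hA.eigenvalues a + δ := by
          have hb : ε * (T.card : ℝ) ≤ δ := by
            rw [hεdef, div_mul_eq_mul_div, div_le_iff₀ hcpos]
            nlinarith [hδ.le]
          linarith
  · have h1 := RedMaj.sum_eigenvalues_eq_trace' hA
    have h2 := RedMaj.sum_eigenvalues_eq_trace' hρ.1.1
    have h3 := RedMaj.trace_ptrB ρ
    have : ((∑ i, hA.eigenvalues i : ℝ) : ℂ) = ((∑ i, hρ.1.1.eigenvalues i : ℝ) : ℂ) := by
      rw [h1, h2, h3]
    exact_mod_cast this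



end
end

section
/- An entangled maximally correlated state ρ = Σ_{i,j} c_{ij} |ii⟩⟨jj| (with c_{ij} not diagonal, i.e., there exist i ≠ j with c_{ij} ≠ 0) has a partial transpose that is not positive semidefinite. -/
open Matrix BigOperators
open scoped ComplexOrder

noncomputable section

/-- The maximally correlated state ρ = Σ_{i,j} c_{ij} |ii⟩⟨jj| on C^d ⊗ C^d. -/
def maxCorrMat {d : ℕ} (c : Matrix (Fin d) (Fin d) ℂ) :
    Matrix (Fin d × Fin d) (Fin d × Fin d) ℂ :=
  fun p q => if p.2 = p.1 ∧ q.2 = q.1 then c p.1 q.1 else 0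

/-- an entangled maximally correlated state (c not diagonal)
has non-positive partial transpose. -/
theorem entangled_max_correlated_is_npt {d : ℕ}
    (c : Matrix (Fin d) (Fin d) ℂ) (hc : c.PosSemidef) (htr : c.trace = 1)
    (hod : ∃ i j, i ≠ j ∧ c i j ≠ 0) :
    ¬(ptransB (maxCorrMat c)).PosSemidef := by
  rw [posSemidef_iff_dotProduct_mulVec]
  rintro ⟨_, hpos⟩
  obtain ⟨i, j, hij, hcij⟩ := hod
  set t : ℂ := -(starRingEnd ℂ) (c i j) with ht
  set x : Fin d × Fin d → ℂ := fun p =>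
    (if p = (i, j) then 1 else 0) + (if p = (j, i) then t else 0) with hx
  have h1 : ((i, j) : Fin d × Fin d) ≠ (j, i) := by
    simp [Prod.ext_iff]; intro h; exact absurd h hij
  have key := hpos x
  have hval : star x ⬝ᵥ (ptransB (maxCorrMat c)) *ᵥ x
      = -(2 * Complex.normSq (c i j)) := by
    have hM : ∀ p q : Fin d × Fin d, ptransB (maxCorrMat c) p q
        = if q.2 = p.1 ∧ p.2 = q.1 then c p.1 q.1 else 0 := by
      intro p q; rfl
    simp only [dotProduct, mulVec, dotProduct, hx, Pi.star_apply]
    simp only [mul_add, add_mul, Finset.sum_add_distrib, mul_ite, ite_mul,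
      mul_zero, zero_mul, mul_one, one_mul, Finset.sum_ite_eq',
      Finset.mem_univ, if_true, star_add, apply_ite (starRingEnd ℂ), map_zero,
      _root_.map_one]
    simp only [hM]
    have hji : ¬((j : Fin d) = i) := fun h => hij h.symm
    simp only [apply_ite (star : ℂ → ℂ), star_zero, star_one, ite_mul, zero_mul,
      one_mul, Finset.sum_ite_eq', Finset.mem_univ, if_true]
    simp only [hij, hji, and_true, true_and, and_false, false_and, and_self,
      if_true, if_false, mul_zero, zero_mul, add_zero, zero_add,
      Complex.star_def]
    have hth : (starRingEnd ℂ) (c j i) = c i j := congrFun (congrFun hc.1 i) j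
    have hcji : c j i = (starRingEnd ℂ) (c i j) := by
      rw [← hth, Complex.conj_conj]
    rw [ht]
    simp only [map_neg, Complex.conj_conj, hcji]
    rw [neg_mul, mul_neg, ← neg_add, Complex.mul_conj]
    push_cast
    ring
  rw [hval] at key
  have hpos' : 0 < Complex.normSq (c i j) := Complex.normSq_pos.2 hcij
  have hre := (Complex.le_def.1 key).1
  simp at hre
  linarith

end
end

section
/- If a tripartite pure state |Ψ⟩_ABC has a reduced state ρ_AB satisfying the reduction criterion ρ_A ⊗ I_B ≥ ρ_AB and I_A ⊗ ρ_B ≥ ρ_AB, then rank ρ_C ≥ rank ρ_A and rank ρ_C ≥ rank ρ_B. -/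
open Matrix BigOperators
open scoped ComplexOrder

noncomputable section

section AuxReduction

open Matrix Kronecker

variable {m n : Type*} [Fintype m] [Fintype n] [DecidableEq m] [DecidableEq n]

lemma tens_eq_kronecker (A : Matrix m m ℂ) (B : Matrix n n ℂ) :
    tens A B = A ⊗ₖ B := rfl

lemma tens_conjT (A : Matrix m m ℂ) (B : Matrix n n ℂ) :
    (tens A B)ᴴ = tens Aᴴ Bᴴ := by
  ext p q
  simp [tens, Matrix.conjTranspose_apply, mul_comm]

lemma tens_mul_tens (A C : Matrix m m ℂ) (B D : Matrix n n ℂ) :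
    tens A B * tens C D = tens (A * C) (B * D) := by
  rw [tens_eq_kronecker, tens_eq_kronecker, tens_eq_kronecker, Matrix.mul_kronecker_mul]

lemma tens_one_one : tens (1 : Matrix m m ℂ) (1 : Matrix n n ℂ) = 1 := by
  rw [tens_eq_kronecker, Matrix.one_kronecker_one]

lemma tens_sub_left (A B : Matrix m m ℂ) (C : Matrix n n ℂ) :
    tens (A - B) C = tens A C - tens B C := by
  ext p q
  simp [tens, sub_mul]

lemma tens_one_posSemidef {X : Matrix m m ℂ} (hX : X.PosSemidef) :
    (tens X (1 : Matrix n n ℂ)).PosSemidef := by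
  exact hX.kronecker Matrix.PosSemidef.one

lemma trace_tens_one_mul (X : Matrix m m ℂ) (ρ : Matrix (m × n) (m × n) ℂ) :
    (tens X (1 : Matrix n n ℂ) * ρ).trace = ∑ a, ∑ a', X a a' * ∑ b, ρ (a', b) (a, b) := by
  simp only [Matrix.trace, Matrix.diag, Matrix.mul_apply, tens, Matrix.one_apply,
    mul_ite, mul_one, mul_zero, ite_mul, zero_mul, Fintype.sum_prod_type,
    Finset.sum_ite_eq, Finset.mem_univ, if_pos, Finset.mul_sum]
  exact Finset.sum_congr rfl fun a _ => Finset.sum_comm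

/-- For a PSD matrix `M` with `1 - M` PSD, any real number equal to the trace is at
most the rank. -/
lemma real_trace_le_rank {k : Type*} [Fintype k] [DecidableEq k] {M : Matrix k k ℂ}
    (hM : M.PosSemidef) (h1 : ((1 : Matrix k k ℂ) - M).PosSemidef) {r : ℝ}
    (hr : M.trace = (r : ℂ)) : r ≤ (M.rank : ℝ) := by
  have hH : M.IsHermitian := hM.1
  have hUU : star (hH.eigenvectorUnitary : Matrix k k ℂ) *
      (hH.eigenvectorUnitary : Matrix k k ℂ) = 1 := by
    have := (hH.eigenvectorUnitary).2
    rwa [Matrix.mem_unitaryGroup_iff'] at this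
  have htr : M.trace = ∑ i, ((hH.eigenvalues i : ℝ) : ℂ) := by
    conv_lhs => rw [hH.spectral_theorem, Unitary.conjStarAlgAut_apply]
    rw [Matrix.trace_mul_comm, ← Matrix.mul_assoc, hUU, Matrix.one_mul]
    simp [Matrix.trace_diagonal]
  have hre : r = ∑ i, hH.eigenvalues i := by
    have h2 : ((r : ℂ)) = ((∑ i, hH.eigenvalues i : ℝ) : ℂ) := by
      rw [← hr, htr]; push_cast; rfl
    exact_mod_cast h2
  have hub : ∀ i, hH.eigenvalues i ≤ 1 := by
    intro i
    have hv : M *ᵥ ⇑(hH.eigenvectorBasis i) = hH.eigenvalues i • ⇑(hH.eigenvectorBasis i) :=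
      hH.mulVec_eigenvectorBasis i
    have hvv : dotProduct (star ⇑(hH.eigenvectorBasis i)) ⇑(hH.eigenvectorBasis i)
        = 1 := by
      have horth := orthonormal_iff_ite.mp hH.eigenvectorBasis.orthonormal i i
      rw [EuclideanSpace.inner_eq_star_dotProduct] at horth
      simpa [dotProduct_comm] using horth
    have hpos := h1.dotProduct_mulVec_nonneg ⇑(hH.eigenvectorBasis i)
    rw [Matrix.sub_mulVec, Matrix.one_mulVec, hv, dotProduct_sub, hvv,
      dotProduct_smul, hvv] at hpos
    rw [Complex.real_smul, mul_one] at hpos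
    have h3 : (0 : ℂ) ≤ (((1 : ℝ) - hH.eigenvalues i : ℝ) : ℂ) := by
      push_cast
      exact hpos
    have := Complex.zero_le_real.mp h3
    linarith
  have hnn : ∀ i, 0 ≤ hH.eigenvalues i := fun i => hM.eigenvalues_nonneg i
  rw [hre, hH.rank_eq_card_non_zero_eigs]
  calc ∑ i, hH.eigenvalues i
      = ∑ i ∈ Finset.univ.filter (fun i => hH.eigenvalues i ≠ 0), hH.eigenvalues i := by
        rw [Finset.sum_filter_ne_zero]
    _ ≤ ∑ _i ∈ Finset.univ.filter (fun i => hH.eigenvalues i ≠ 0), (1 : ℝ) :=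
        Finset.sum_le_sum fun i _ => hub i
    _ = ((Finset.univ.filter (fun i => hH.eigenvalues i ≠ 0)).card : ℝ) := by simp
    _ = (Fintype.card {i // hH.eigenvalues i ≠ 0} : ℝ) := by
        rw [Fintype.card_subtype]

/-- Core lemma: if `ρ` is PSD with partial trace `σ` (also PSD), and
`σ ⊗ 1 - ρ` is PSD, then `rank σ ≤ rank ρ`. -/
lemma rank_ptr_le_of_reduction {ρ : Matrix (m × n) (m × n) ℂ} {σ : Matrix m m ℂ}
    (hρ : ρ.PosSemidef) (hσp : σ.PosSemidef)
    (htr : ∀ x y, σ x y = ∑ j, ρ (x, j) (y, j))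
    (h : (tens σ (1 : Matrix n n ℂ) - ρ).PosSemidef) :
    σ.rank ≤ ρ.rank := by
  classical
  have hσ : σ.IsHermitian := hσp.1
  set U : Matrix m m ℂ := (hσ.eigenvectorUnitary : Matrix m m ℂ) with hUdef
  set lam : m → ℝ := hσ.eigenvalues with hlamdef
  have hUU : Uᴴ * U = 1 := by
    have := (hσ.eigenvectorUnitary).2
    rw [Matrix.mem_unitaryGroup_iff'] at this
    simpa [Matrix.star_eq_conjTranspose] using this
  have hUU' : U * Uᴴ = 1 := by
    have := (hσ.eigenvectorUnitary).2
    rw [Matrix.mem_unitaryGroup_iff] at this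
    simpa [Matrix.star_eq_conjTranspose] using this
  have hmul : ∀ f g : m → ℂ, (U * Matrix.diagonal f * Uᴴ) * (U * Matrix.diagonal g * Uᴴ)
      = U * Matrix.diagonal (fun i => f i * g i) * Uᴴ := by
    intro f g
    simp only [Matrix.mul_assoc]
    rw [← Matrix.mul_assoc Uᴴ U (Matrix.diagonal g * Uᴴ), hUU, Matrix.one_mul,
      ← Matrix.mul_assoc (Matrix.diagonal f) (Matrix.diagonal g) Uᴴ,
      Matrix.diagonal_mul_diagonal]
  have hspec : σ = U * Matrix.diagonal (fun i => (lam i : ℂ)) * Uᴴ := by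
    have := hσ.spectral_theorem
    rw [Unitary.conjStarAlgAut_apply, Matrix.star_eq_conjTranspose] at this
    exact this
  set d : m → ℝ := fun i => if lam i = 0 then 0 else (Real.sqrt (lam i))⁻¹ with hd
  set E : Matrix m m ℂ := U * Matrix.diagonal (fun i => (d i : ℂ)) * Uᴴ with hE
  have hdg : (Matrix.diagonal (fun i => (d i : ℂ)))ᴴ = Matrix.diagonal (fun i => (d i : ℂ)) := by
    ext i j
    rcases eq_or_ne i j with hij | hij
    · subst hij
      simp [Matrix.conjTranspose_apply, Complex.conj_ofReal]
    · rw [Matrix.conjTranspose_apply, Matrix.diagonal_apply_ne _ hij.symm, star_zero,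
        Matrix.diagonal_apply_ne _ hij]
  have hEH : Eᴴ = E := by
    rw [hE, Matrix.conjTranspose_mul, Matrix.conjTranspose_mul,
      Matrix.conjTranspose_conjTranspose, hdg, Matrix.mul_assoc]
  set D : Matrix (m × n) (m × n) ℂ := tens E (1 : Matrix n n ℂ) with hD
  have hDH : Dᴴ = D := by
    rw [hD, tens_conjT, hEH, Matrix.conjTranspose_one]
  set M : Matrix (m × n) (m × n) ℂ := D * ρ * Dᴴ with hM
  have hMpsd : M.PosSemidef := hρ.mul_mul_conjTranspose_same D
  have hrankM : M.rank ≤ ρ.rank :=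
    le_trans (Matrix.rank_mul_le_left _ _) (Matrix.rank_mul_le_right _ _)
  set s : m → ℝ := fun i => if lam i = 0 then 0 else 1 with hs
  have hdld : ∀ i, (d i : ℂ) * ((lam i : ℂ) * (d i : ℂ)) = (s i : ℂ) := by
    intro i
    by_cases hzero : lam i = 0
    · simp [hd, hs, hzero]
    · have hpos : 0 < lam i := lt_of_le_of_ne (hσp.eigenvalues_nonneg i) (Ne.symm hzero)
      simp only [hd, hs, if_neg hzero]
      rw [← Complex.ofReal_mul, ← Complex.ofReal_mul]
      congr 1
      rw [show (Real.sqrt (lam i))⁻¹ * (lam i * (Real.sqrt (lam i))⁻¹)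
          = lam i / (Real.sqrt (lam i) * Real.sqrt (lam i)) by ring,
        Real.mul_self_sqrt hpos.le, div_self hzero]
  have hEσE : E * σ * E = U * Matrix.diagonal (fun i => (s i : ℂ)) * Uᴴ := by
    have hfun : (fun i => (d i : ℂ) * ((lam i : ℂ) * (d i : ℂ))) = (fun i => (s i : ℂ)) :=
      funext hdld
    rw [hE, hspec, Matrix.mul_assoc (U * Matrix.diagonal (fun i => (d i : ℂ)) * Uᴴ),
      hmul, hmul, hfun]
  have hDσD : D * tens σ (1 : Matrix n n ℂ) * D
      = tens (U * Matrix.diagonal (fun i => (s i : ℂ)) * Uᴴ) (1 : Matrix n n ℂ) := by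
    rw [hD, tens_mul_tens, tens_mul_tens, Matrix.one_mul, Matrix.one_mul, hEσE]
  have hone : (1 : Matrix (m × n) (m × n) ℂ)
      = tens (U * Matrix.diagonal (fun _ => (1 : ℂ)) * Uᴴ) (1 : Matrix n n ℂ) := by
    rw [Matrix.diagonal_one, Matrix.mul_one, hUU', tens_one_one]
  have hdiagsub : U * Matrix.diagonal (fun i => ((1 - s i : ℝ) : ℂ)) * Uᴴ
      = U * Matrix.diagonal (fun _ => (1 : ℂ)) * Uᴴ
        - U * Matrix.diagonal (fun i => (s i : ℂ)) * Uᴴ := by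
    have hfun2 : Matrix.diagonal (fun i => ((1 - s i : ℝ) : ℂ))
        = Matrix.diagonal (fun _ => (1 : ℂ)) - Matrix.diagonal (fun i => (s i : ℂ)) := by
      rw [Matrix.diagonal_sub (fun _ => (1 : ℂ)) (fun i => ((s i : ℝ) : ℂ))]
      have hl : (fun i => ((1 - s i : ℝ) : ℂ)) = fun i => (1 : ℂ) - ((s i : ℝ) : ℂ) := by
        funext i
        push_cast
        ring
      rw [hl]
    rw [hfun2, Matrix.mul_sub, Matrix.sub_mul]
  have hB : (1 : Matrix (m × n) (m × n) ℂ) - D * tens σ (1 : Matrix n n ℂ) * Dᴴ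
      = tens (U * Matrix.diagonal (fun i => ((1 - s i : ℝ) : ℂ)) * Uᴴ) (1 : Matrix n n ℂ) := by
    rw [hDH, hDσD, hdiagsub, tens_sub_left, ← hone]
  have h1M : ((1 : Matrix (m × n) (m × n) ℂ) - M).PosSemidef := by
    have heq : (1 : Matrix (m × n) (m × n) ℂ) - M
        = ((1 : Matrix (m × n) (m × n) ℂ) - D * tens σ (1 : Matrix n n ℂ) * Dᴴ)
          + D * (tens σ (1 : Matrix n n ℂ) - ρ) * Dᴴ := by
      rw [Matrix.mul_sub, Matrix.sub_mul, ← hM]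
      exact (sub_add_sub_cancel _ _ _).symm
    rw [heq, hB]
    refine Matrix.PosSemidef.add ?_ (h.mul_mul_conjTranspose_same D)
    refine tens_one_posSemidef ?_
    refine Matrix.PosSemidef.mul_mul_conjTranspose_same ?_ U
    refine Matrix.posSemidef_diagonal_iff.mpr fun i => ?_
    rw [Complex.zero_le_real]
    by_cases hzero : lam i = 0 <;> simp [hs, hzero]
  set cnt : ℕ := Fintype.card {i // lam i ≠ 0} with hcnt
  have htrM : M.trace = ((cnt : ℝ) : ℂ) := by
    have h1 : M.trace = (Dᴴ * D * ρ).trace := by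
      rw [hM, Matrix.mul_assoc, Matrix.trace_mul_comm, Matrix.mul_assoc]
      exact Matrix.trace_mul_comm _ _
    have hDD : Dᴴ * D = tens (U * Matrix.diagonal (fun i => (d i : ℂ) * (d i : ℂ)) * Uᴴ)
        (1 : Matrix n n ℂ) := by
      rw [hDH, hD, tens_mul_tens, Matrix.one_mul, hE, hmul]
    rw [h1, hDD, trace_tens_one_mul]
    have h2 : ∀ a a' : m, (∑ b, ρ (a', b) (a, b)) = σ a' a := fun a a' => (htr a' a).symm
    calc ∑ a, ∑ a', (U * Matrix.diagonal (fun i => (d i : ℂ) * (d i : ℂ)) * Uᴴ) a a'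
            * ∑ b, ρ (a', b) (a, b)
        = ∑ a, ∑ a', (U * Matrix.diagonal (fun i => (d i : ℂ) * (d i : ℂ)) * Uᴴ) a a'
            * σ a' a := by
          refine Finset.sum_congr rfl fun a _ => Finset.sum_congr rfl fun a' _ => ?_
          rw [h2]
      _ = ((U * Matrix.diagonal (fun i => (d i : ℂ) * (d i : ℂ)) * Uᴴ) * σ).trace := by
          simp only [Matrix.trace, Matrix.diag, Matrix.mul_apply]
      _ = ((cnt : ℝ) : ℂ) := by
          rw [hspec, hmul, Matrix.trace_mul_comm, ← Matrix.mul_assoc, hUU, Matrix.one_mul,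
            Matrix.trace_diagonal]
          have h3 : ∀ i : m, (d i : ℂ) * (d i : ℂ) * (lam i : ℂ) = (s i : ℂ) := by
            intro i
            rw [mul_assoc, mul_comm ((d i : ℂ)) ((lam i : ℂ)), hdld i]
          calc (∑ i, (d i : ℂ) * (d i : ℂ) * (lam i : ℂ))
              = ∑ i, (s i : ℂ) := Finset.sum_congr rfl fun i _ => h3 i
            _ = ∑ i, (if lam i ≠ 0 then (1 : ℂ) else 0) := by
                refine Finset.sum_congr rfl fun i _ => ?_
                by_cases hzero : lam i = 0 <;> simp [hs, hzero]
            _ = ((Finset.univ.filter (fun i => lam i ≠ 0)).card : ℂ) := by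
                rw [Finset.sum_boole]
            _ = ((cnt : ℝ) : ℂ) := by
                rw [hcnt, Fintype.card_subtype]
                push_cast
                rfl
  have hfin : (cnt : ℝ) ≤ (M.rank : ℝ) := real_trace_le_rank hMpsd h1M htrM
  have hcard : σ.rank = cnt := hσ.rank_eq_card_non_zero_eigs
  have : (cnt : ℝ) ≤ (ρ.rank : ℝ) := le_trans hfin (by exact_mod_cast hrankM)
  rw [hcard]
  exact_mod_cast this

end AuxReduction

/-- if ρ_AB satisfies the reduction criterion then
rank ρ_C ≥ rank ρ_A and rank ρ_C ≥ rank ρ_B. -/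
theorem rank_env_ge_of_reduction {a b c : ℕ}
    (ψ : Fin a × Fin b × Fin c → ℂ) (hψ : UnitVec ψ)
    (hred : (tens (rhoA ψ) (1 : Matrix (Fin b) (Fin b) ℂ) - rhoAB ψ).PosSemidef ∧
            (tens (1 : Matrix (Fin a) (Fin a) ℂ) (rhoB ψ) - rhoAB ψ).PosSemidef) :
    (rhoA ψ).rank ≤ (rhoC ψ).rank ∧ (rhoB ψ).rank ≤ (rhoC ψ).rank := by
  classical
  set N : Matrix (Fin a × Fin b) (Fin c) ℂ := Matrix.of fun p r => ψ (p.1, p.2, r) with hN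
  have hABN : rhoAB ψ = N * Nᴴ := by
    ext p q
    simp [rhoAB, Matrix.mul_apply, Matrix.conjTranspose_apply, hN, Complex.star_def]
  have hCN : rhoC ψ = ((Nᴴ * N)ᴴ)ᵀ := by
    ext x y
    simp only [rhoC, Matrix.transpose_apply, Matrix.conjTranspose_apply, Matrix.mul_apply,
      hN, Matrix.of_apply, Fintype.sum_prod_type, star_sum, star_mul', star_star,
      Complex.star_def]
    refine Finset.sum_congr rfl fun i _ => Finset.sum_congr rfl fun j _ => ?_
    rw [Complex.conj_conj]
  have hrankC : (rhoC ψ).rank = (rhoAB ψ).rank := by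
    rw [hABN, hCN, Matrix.rank_transpose, Matrix.rank_conjTranspose,
      Matrix.rank_conjTranspose_mul_self, Matrix.rank_self_mul_conjTranspose]
  have hABpsd : (rhoAB ψ).PosSemidef := by
    rw [hABN]; exact Matrix.posSemidef_self_mul_conjTranspose N
  set NA : Matrix (Fin a) (Fin b × Fin c) ℂ := Matrix.of fun x p => ψ (x, p.1, p.2) with hNA
  have hApsd : (rhoA ψ).PosSemidef := by
    have hh : rhoA ψ = NA * NAᴴ := by
      ext x y
      simp [rhoA, Matrix.mul_apply, Matrix.conjTranspose_apply, hNA, Complex.star_def,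
        Fintype.sum_prod_type]
    rw [hh]; exact Matrix.posSemidef_self_mul_conjTranspose NA
  set NB : Matrix (Fin b) (Fin a × Fin c) ℂ := Matrix.of fun x p => ψ (p.1, x, p.2) with hNB
  have hBpsd : (rhoB ψ).PosSemidef := by
    have hh : rhoB ψ = NB * NBᴴ := by
      ext x y
      simp [rhoB, Matrix.mul_apply, Matrix.conjTranspose_apply, hNB, Complex.star_def,
        Fintype.sum_prod_type]
    rw [hh]; exact Matrix.posSemidef_self_mul_conjTranspose NB
  have htrA : ∀ x y, rhoA ψ x y = ∑ j : Fin b, rhoAB ψ (x, j) (y, j) := fun x y => rfl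
  have h1 : (rhoA ψ).rank ≤ (rhoAB ψ).rank :=
    rank_ptr_le_of_reduction hABpsd hApsd htrA hred.1
  set e : Fin b × Fin a ≃ Fin a × Fin b := Equiv.prodComm (Fin b) (Fin a) with he
  set ρ' : Matrix (Fin b × Fin a) (Fin b × Fin a) ℂ := (rhoAB ψ).submatrix e e with hρ'
  have hρ'psd : ρ'.PosSemidef := hABpsd.submatrix e
  have htrB : ∀ x y, rhoB ψ x y = ∑ j : Fin a, ρ' (x, j) (y, j) := fun x y => rfl
  have hredB : (tens (rhoB ψ) (1 : Matrix (Fin a) (Fin a) ℂ) - ρ').PosSemidef := by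
    have heq : tens (rhoB ψ) (1 : Matrix (Fin a) (Fin a) ℂ) - ρ'
        = (tens (1 : Matrix (Fin a) (Fin a) ℂ) (rhoB ψ) - rhoAB ψ).submatrix e e := by
      ext p q
      simp only [tens, Matrix.sub_apply, Matrix.submatrix_apply, hρ', he,
        Equiv.prodComm_apply, Prod.swap_prod_mk, Matrix.one_apply, Prod.fst_swap,
        Prod.snd_swap]
      ring
    rw [heq]
    exact (hred.2).submatrix e
  have h2 : (rhoB ψ).rank ≤ ρ'.rank :=
    rank_ptr_le_of_reduction hρ'psd hBpsd htrB hredB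
  have h3 : ρ'.rank = (rhoAB ψ).rank := Matrix.rank_submatrix _ e e
  refine ⟨?_, ?_⟩
  · rw [hrankC]; exact h1
  · rw [hrankC]; exact h2.trans (le_of_eq h3)

end
end
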